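/- arXiv:1906.09916 — 3 statements merged into one kernel-verified Lean document; each statement's English description precedes it below -/
import Mathlib

section
/- Let p be a prime and n ≥ 1. A vector y ∈ ℚ_p^n is very well multiplicatively approximable if and only if there exist γ with 0 < γ < 1/(n+1) and vectors t = (t₀, …, t_n) ∈ ℤ_{≥0}^{n+1} with t = Σᵢ tᵢ taking arbitrarily large values such that δ(g_t u_y D^{n+1}) ≤ p^{-γ t}. -/
set_option linter.unusedSectionVars false
set_option linter.unnecessarySimpa false
set_option linter.deprecated false
set_option maxHeartbeats 1000000


open MeasureTheory Metric
open scoped ENNReal NNReal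

namespace PadicDioph

variable (p : ℕ) [Fact p.Prime]

noncomputable instance : MeasurableSpace ℚ_[p] := borel _
instance : BorelSpace ℚ_[p] := ⟨rfl⟩

/-- Membership in `ℤ[1/p]`, viewed inside `ℚ`. -/
def IsZInvP (q : ℚ) : Prop := ∃ (z : ℤ) (k : ℕ), q = (z : ℚ) / (p : ℚ) ^ k

/-- Sup norm (max of archimedean absolute values) of a finite tuple of rationals. -/
noncomputable def supNormR {m : ℕ} (q : Fin m → ℚ) : ℝ := ⨆ i, |(q i : ℝ)|

/-- Sup of the `p`-adic absolute values of a finite tuple of rationals. -/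
noncomputable def supNormP {m : ℕ} (q : Fin m → ℚ) : ℝ := ⨆ i, ‖((q i : ℚ_[p]))‖

/-- Sup norm of an integer tuple together with an extra integer coordinate. -/
noncomputable def supNormZ {n : ℕ} (q0 : ℤ) (q : Fin n → ℤ) : ℝ :=
  max |(q0 : ℝ)| (⨆ i, |((q i : ℤ) : ℝ)|)

/-- The classical Diophantine exponent `w(y)` of `y ∈ ℚ_p^n`: the supremum of all `v > 0`
such that `|q₀ + q·y|_p ≤ ‖(q₀,q)‖_∞^{-v}` has infinitely many integer solutions. -/
noncomputable def wExp {n : ℕ} (y : Fin n → ℚ_[p]) : ℝ≥0∞ :=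
  ⨆ (v : ℝ) (_ : 0 < v ∧
    {qq : ℤ × (Fin n → ℤ) |
      ‖((qq.1 : ℚ_[p]) + ∑ i, (qq.2 i : ℚ_[p]) * y i)‖ ≤
        (supNormZ qq.1 qq.2) ^ (-v)}.Infinite), ENNReal.ofReal v

/-- `y` is very well approximable if `w(y) > n + 1`. -/
def IsVWA {n : ℕ} (y : Fin n → ℚ_[p]) : Prop :=
  ENNReal.ofReal ((n : ℝ) + 1) < wExp p y

/-- The defining condition of the exponent `w_p`: there are solutions
`q̃ = (q₀, q) ∈ ℤ[1/p]^{n+1}` of `|q·y + q₀|_p < (‖q‖_p ‖q̃‖_∞)^{-v} ‖q̃‖_∞^{-1}`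
with `‖q‖_p ‖q̃‖_∞` arbitrarily large. -/
def WpCond {n : ℕ} (y : Fin n → ℚ_[p]) (v : ℝ) : Prop :=
  ∀ T : ℝ, ∃ (q0 : ℚ) (q : Fin n → ℚ),
    IsZInvP p q0 ∧ (∀ i, IsZInvP p (q i)) ∧
    T < supNormP p q * supNormR (Fin.cons q0 q) ∧
    ‖(∑ i, (q i : ℚ_[p]) * y i) + (q0 : ℚ_[p])‖ <
      (supNormP p q * supNormR (Fin.cons q0 q)) ^ (-v) * (supNormR (Fin.cons q0 q))⁻¹

/-- The exponent `w_p(y)`. -/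
noncomputable def wpExp {n : ℕ} (y : Fin n → ℚ_[p]) : ℝ≥0∞ :=
  ⨆ (v : ℝ) (_ : 0 < v ∧ WpCond p y v), ENNReal.ofReal v

/-- `Π_+` of a tuple of rationals: the product of `|q_i|_∞` over the nonzero coordinates. -/
noncomputable def piPlusQ {m : ℕ} (q : Fin m → ℚ) : ℝ :=
  ∏ i, (if q i = 0 then 1 else |(q i : ℝ)|)

/-- `Π_+` of `(q₀, q)` with integer coordinates. -/
noncomputable def piPlusZ {n : ℕ} (q0 : ℤ) (q : Fin n → ℤ) : ℝ :=
  (if q0 = 0 then 1 else |(q0 : ℝ)|) * ∏ i, (if q i = 0 then 1 else |((q i : ℤ) : ℝ)|)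

/-- `y ∈ ℚ_p^n` is very well multiplicatively approximable. -/
def IsVWMA {n : ℕ} (y : Fin n → ℚ_[p]) : Prop :=
  ∃ ε : ℝ, 0 < ε ∧
    {qq : ℤ × (Fin n → ℤ) |
      ‖((qq.1 : ℚ_[p]) + ∑ i, (qq.2 i : ℚ_[p]) * y i)‖ ≤
        (piPlusZ qq.1 qq.2) ^ (-(1 + ε))}.Infinite

/-- A measure on `ℚ_p^n` is strongly extremal if almost every point is not VWMA. -/
def StronglyExtremal {n : ℕ} (μ : Measure (Fin n → ℚ_[p])) : Prop :=
  ∀ᵐ y ∂μ, ¬ IsVWMA p y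

/-- `δ(g_t u_y D^{n+1})` for the one-parameter flow: `g_t` has `p`-adic component
`diag(p^{-t},1,…,1)` and archimedean component `p^{-t/(n+1)}·Id`. -/
noncomputable def deltaOne {n : ℕ} (y : Fin n → ℚ_[p]) (t : ℕ) : ℝ :=
  sInf { c : ℝ | ∃ qt : Fin (n + 1) → ℚ, (∀ i, IsZInvP p (qt i)) ∧ qt ≠ 0 ∧
    c = ((p : ℝ) ^ (-(t : ℝ) / ((n : ℝ) + 1)) * supNormR qt) *
        max (‖(((p : ℚ_[p]) ^ t)⁻¹ * ((qt 0 : ℚ_[p]) + ∑ i : Fin n, (qt i.succ : ℚ_[p]) * y i))‖)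
            (⨆ i : Fin n, ‖((qt i.succ : ℚ_[p]))‖) }

/-- The exponent `γ(y)`. -/
noncomputable def gammaExp {n : ℕ} (y : Fin n → ℚ_[p]) : ℝ :=
  sSup {c : ℝ | 0 ≤ c ∧ ∀ N : ℕ, ∃ t : ℕ, N ≤ t ∧
    deltaOne p y t ≤ (p : ℝ) ^ (-(c * (t : ℝ)))}

/-- `δ(g_t u_y D^{n+1})` for the multiparameter flow: for `t = (t₀,…,t_n)` with
`T = Σ tᵢ`, the `p`-adic component of `g_t` is `diag(p^{-T},1,…,1)` and the archimedean
component is `diag(p^{-t₀},…,p^{-t_n})`. -/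
noncomputable def deltaMulti {n : ℕ} (y : Fin n → ℚ_[p]) (t : Fin (n + 1) → ℕ) : ℝ :=
  sInf { c : ℝ | ∃ qt : Fin (n + 1) → ℚ, (∀ i, IsZInvP p (qt i)) ∧ qt ≠ 0 ∧
    c = (⨆ i, (p : ℝ) ^ (-((t i : ℝ))) * |(qt i : ℝ)|) *
        max (‖(((p : ℚ_[p]) ^ (∑ i, t i))⁻¹ *
              ((qt 0 : ℚ_[p]) + ∑ i : Fin n, (qt i.succ : ℚ_[p]) * y i))‖)
            (⨆ i : Fin n, ‖((qt i.succ : ℚ_[p]))‖) }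

/-- The support of a measure on a metric space. -/
def measSupp {X : Type*} [MetricSpace X] [MeasurableSpace X] (μ : Measure X) : Set X :=
  {x | ∀ r : ℝ, 0 < r → 0 < μ (ball x r)}

/-- `‖f‖_{μ,B}`. -/
noncomputable def muSupNorm {X : Type*} [MetricSpace X] [MeasurableSpace X]
    (μ : Measure X) (B : Set X) (f : X → ℚ_[p]) : ℝ :=
  sSup {c : ℝ | 0 < μ {x ∈ B | c < ‖f x‖}}

/-- `f` is `(C, α)`-good on `V` with respect to `μ`. -/
def IsGoodOn {X : Type*} [MetricSpace X] [MeasurableSpace X] (μ : Measure X)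
    (C a : ℝ) (V : Set X) (f : X → ℚ_[p]) : Prop :=
  ∀ (x₀ : X) (r : ℝ), 0 < r → x₀ ∈ measSupp μ → ball x₀ r ⊆ V →
    ∀ ε : ℝ, 0 < ε →
      μ {x ∈ ball x₀ r | ‖f x‖ < ε} ≤
        ENNReal.ofReal (C * (ε / muSupNorm p μ (ball x₀ r) f) ^ a) * μ (ball x₀ r)

/-- A metric space is Besicovitch: any family of balls whose centers exhaust a bounded
set `A` admits a countable subfamily covering `A` with multiplicity at most `N`. -/
def IsBesicovitch (X : Type*) [MetricSpace X] : Prop :=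
  ∃ N : ℕ, ∀ (A : Set X), Bornology.IsBounded A →
    ∀ F : Set (X × ℝ), (∀ b ∈ F, 0 < b.2) → (∀ x ∈ A, ∃ r : ℝ, (x, r) ∈ F) →
      ∃ S ⊆ F, S.Countable ∧ (∀ x ∈ A, ∃ b ∈ S, x ∈ ball b.1 b.2) ∧
        ∀ x : X, {b ∈ S | x ∈ ball b.1 b.2}.encard ≤ N

/-- `μ` is `D`-Federer on the open set `U`. -/
def IsDFedererOn {X : Type*} [MetricSpace X] [MeasurableSpace X]
    (μ : Measure X) (D : ℝ) (U : Set X) : Prop :=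
  ∀ x ∈ measSupp μ, ∀ r : ℝ, 0 < r → ball x (3 * r) ⊆ U →
    μ (ball x (3 * r)) ≤ ENNReal.ofReal D * μ (ball x r)

/-- `μ` is Federer. -/
def IsFederer {X : Type*} [MetricSpace X] [MeasurableSpace X] (μ : Measure X) : Prop :=
  ∀ᵐ x ∂μ, ∃ U : Set X, IsOpen U ∧ x ∈ U ∧ 0 < μ U ∧ ∃ D : ℝ, 0 < D ∧ IsDFedererOn μ D U

/-- The pair `(f, μ)` is good: `μ`-a.e. point has a neighbourhood `V` and `C, α > 0`
such that every affine combination `c₀ + Σ cᵢ fᵢ` is `(C, α)`-good on `V` w.r.t. `μ`. -/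
def GoodPair {X : Type*} [MetricSpace X] [MeasurableSpace X] {n : ℕ}
    (f : X → (Fin n → ℚ_[p])) (μ : Measure X) : Prop :=
  ∀ᵐ x ∂μ, ∃ V : Set X, IsOpen V ∧ x ∈ V ∧ ∃ C a : ℝ, 0 < C ∧ 0 < a ∧
    ∀ c0 : ℚ_[p], ∀ c : Fin n → ℚ_[p],
      IsGoodOn p μ C a V (fun x => c0 + ∑ i, c i * f x i)

/-- `(f, μ)` is nonplanar in the affine subspace `L`. -/
def NonplanarIn {X : Type*} [MetricSpace X] [MeasurableSpace X] {n : ℕ}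
    (f : X → (Fin n → ℚ_[p])) (μ : Measure X)
    (L : AffineSubspace ℚ_[p] (Fin n → ℚ_[p])) : Prop :=
  ∀ B : Set X, IsOpen B → B.Nonempty → 0 < μ B →
    affineSpan ℚ_[p] (f '' (B ∩ measSupp μ)) = L

/-- `f` is nondegenerate in the affine subspace `L` at `x`: `f` takes values in `L` and the
span of the partial derivatives of `f` at `x` up to some order is the linear part of `L`. -/
def NondegenerateAt {d n : ℕ} (f : (Fin d → ℚ_[p]) → (Fin n → ℚ_[p]))
    (L : AffineSubspace ℚ_[p] (Fin n → ℚ_[p])) (x : Fin d → ℚ_[p]) : Prop :=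
  (∀ u, f u ∈ L) ∧ ∃ m : ℕ,
    Submodule.span ℚ_[p]
      {v : Fin n → ℚ_[p] | ∃ j : ℕ, j ≤ m ∧ 1 ≤ j ∧ ∃ vs : Fin j → (Fin d → ℚ_[p]),
        v = iteratedFDeriv ℚ_[p] j f x vs} = L.direction

/-- An analytic chart of the `d`-dimensional submanifold `M` of `ℚ_p^n`: an analytic map
`f` on an open set `U`, injective on `U`, immersive, a homeomorphism onto its image, whose
image is a relatively open subset of `M`. -/
def IsChart (d n : ℕ) (M : Set (Fin n → ℚ_[p]))
    (U : Set (Fin d → ℚ_[p])) (f : (Fin d → ℚ_[p]) → (Fin n → ℚ_[p])) : Prop :=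
  IsOpen U ∧ AnalyticOnNhd ℚ_[p] f U ∧ Set.InjOn f U ∧
  (∀ x ∈ U, Function.Injective (fderiv ℚ_[p] f x)) ∧
  (∀ x ∈ U, ∀ V : Set (Fin d → ℚ_[p]), IsOpen V → x ∈ V →
      ∃ W : Set (Fin n → ℚ_[p]), IsOpen W ∧ f x ∈ W ∧ W ∩ f '' U ⊆ f '' (V ∩ U)) ∧
  ∃ W : Set (Fin n → ℚ_[p]), IsOpen W ∧ M ∩ W = f '' U

/-- `M` is a `d`-dimensional analytic submanifold of `ℚ_p^n`. -/
def IsAnalyticSubmanifold (d n : ℕ) (M : Set (Fin n → ℚ_[p])) : Prop :=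
  M.Nonempty ∧ ∀ y ∈ M, ∃ (U : Set (Fin d → ℚ_[p])) (f : (Fin d → ℚ_[p]) → (Fin n → ℚ_[p])),
    IsChart p d n M U f ∧ y ∈ f '' U


lemma one_lt_p_real : (1:ℝ) < p := by exact_mod_cast (Fact.out : p.Prime).one_lt

lemma p_pos_real : (0:ℝ) < p := lt_trans one_pos (one_lt_p_real p)

lemma p_pos_rat : (0:ℚ) < p := by exact_mod_cast (Fact.out : p.Prime).pos

lemma isZInvP_intCast (z : ℤ) : IsZInvP p (z:ℚ) := ⟨z, 0, by simp⟩

lemma isZInvP_zpow_mul (j : ℤ) {q : ℚ} (h : IsZInvP p q) : IsZInvP p ((p:ℚ)^j * q) := by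
  obtain ⟨z, k, rfl⟩ := h
  have hp0 : (p:ℚ) ≠ 0 := (p_pos_rat p).ne'
  set M := (j + (j.natAbs:ℤ)).toNat with hMdef
  have hm : (M:ℤ) = j + j.natAbs := Int.toNat_of_nonneg (by omega)
  refine ⟨z * p ^ M, k + j.natAbs, ?_⟩
  have h1 : ((z * (p:ℤ) ^ M : ℤ) : ℚ) = (z:ℚ) * (p:ℚ) ^ M := by push_cast; ring
  rw [h1, mul_div_assoc']
  rw [div_eq_div_iff (pow_pos (p_pos_rat p) _).ne' (pow_pos (p_pos_rat p) _).ne']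
  rw [← zpow_natCast (p:ℚ) k, ← zpow_natCast (p:ℚ) (k + j.natAbs), ← zpow_natCast (p:ℚ) M, hm]
  push_cast
  rw [zpow_add₀ hp0, zpow_add₀ hp0]
  ring

lemma isZInvP_int_of_norm_le {q : ℚ} (h : IsZInvP p q) (hn : ‖(q:ℚ_[p])‖ ≤ 1) :
    ∃ z : ℤ, (z:ℚ) = q := by
  obtain ⟨z, k, rfl⟩ := h
  have hcast : (((z:ℚ) / (p:ℚ)^k : ℚ) : ℚ_[p]) = (z:ℚ_[p]) / (p:ℚ_[p])^k := by push_cast; ring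
  rw [hcast] at hn
  have hpk : ‖((p:ℚ_[p]))^k‖ = (p:ℝ)^(-(k:ℤ)) := by
    rw [norm_pow, Padic.norm_p, inv_pow, ← zpow_natCast, ← zpow_neg]
  have hz : ‖(z:ℚ_[p])‖ ≤ (p:ℝ)^(-(k:ℤ)) := by
    rw [norm_div, hpk] at hn
    have hpos : (0:ℝ) < (p:ℝ)^(-(k:ℤ)) := zpow_pos (p_pos_real p) _
    calc ‖(z:ℚ_[p])‖ = ‖(z:ℚ_[p])‖ / (p:ℝ)^(-(k:ℤ)) * (p:ℝ)^(-(k:ℤ)) := by field_simp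
    _ ≤ 1 * (p:ℝ)^(-(k:ℤ)) := mul_le_mul_of_nonneg_right hn hpos.le
    _ = (p:ℝ)^(-(k:ℤ)) := one_mul _
  rw [Padic.norm_int_le_pow_iff_dvd] at hz
  obtain ⟨w, hw⟩ := hz
  refine ⟨w, ?_⟩
  rw [hw]
  push_cast
  rw [mul_comm ((p:ℚ)^k) (w:ℚ), mul_div_assoc, div_self (pow_pos (p_pos_rat p) k).ne', mul_one]

lemma exists_norm_tuple_le (n : ℕ) (y : Fin n → ℚ_[p]) :
    ∃ c : ℕ, ∀ i, ‖y i‖ ≤ (p:ℝ)^c := by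
  have h : ∀ i, ∃ m : ℕ, ‖y i‖ ≤ (p:ℝ)^m := by
    intro i
    obtain ⟨m, hm⟩ := exists_nat_gt ‖y i‖
    refine ⟨m, hm.le.trans ?_⟩
    calc (m:ℝ) ≤ (2:ℝ)^m := by exact_mod_cast (Nat.lt_two_pow_self (n := m)).le
    _ ≤ (p:ℝ)^m := by
        apply pow_le_pow_left₀ (by norm_num)
        exact_mod_cast (Fact.out : p.Prime).two_le
  choose m hm using h
  refine ⟨∑ i, m i, fun i => (hm i).trans ?_⟩
  apply pow_le_pow_right₀ (one_lt_p_real p).le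
  exact Finset.single_le_sum (fun _ _ => Nat.zero_le _) (Finset.mem_univ i)

lemma min_sum_le {ι : Type*} (s : Finset ι) (f : ι → ℝ) (c : ℝ)
    (hf : ∀ i ∈ s, 0 ≤ f i) (hc : 0 ≤ c) :
    min (∑ i ∈ s, f i) c ≤ ∑ i ∈ s, min (f i) c := by
  induction s using Finset.cons_induction with
  | empty => simpa using hc
  | cons a s ha ih =>
    rw [Finset.sum_cons, Finset.sum_cons]
    have hfa : 0 ≤ f a := hf a (Finset.mem_cons_self a s)
    have ih' := ih (fun i hi => hf i (Finset.mem_cons_of_mem hi))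
    rcases le_total c (f a) with h | h
    · have h1 : min (f a + ∑ i ∈ s, f i) c ≤ c := min_le_right _ _
      have h2 : 0 ≤ ∑ i ∈ s, min (f i) c :=
        Finset.sum_nonneg fun i hi => le_min (hf i (Finset.mem_cons_of_mem hi)) hc
      have h3 : min (f a) c = c := min_eq_right h
      linarith
    · have h3 : min (f a) c = f a := min_eq_left h
      rcases le_total (∑ i ∈ s, f i) c with hx | hx
      · have h1 : min (f a + ∑ i ∈ s, f i) c ≤ f a + ∑ i ∈ s, f i := min_le_left _ _
        have h2 : min (∑ i ∈ s, f i) c = ∑ i ∈ s, f i := min_eq_left hx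
        linarith
      · have h1 : min (f a + ∑ i ∈ s, f i) c ≤ c := min_le_right _ _
        have h2 : min (∑ i ∈ s, f i) c = c := min_eq_right hx
        linarith

lemma one_le_finprod {ι : Type*} (s : Finset ι) (f : ι → ℝ) (h : ∀ i ∈ s, 1 ≤ f i) :
    1 ≤ ∏ i ∈ s, f i := by
  calc (1:ℝ) = ∏ _i ∈ s, (1:ℝ) := (Finset.prod_const_one).symm
  _ ≤ ∏ i ∈ s, f i := Finset.prod_le_prod (by norm_num) h

lemma single_le_finprod {ι : Type*} [DecidableEq ι] (s : Finset ι) (f : ι → ℝ) (h : ∀ i ∈ s, 1 ≤ f i)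
    {a : ι} (ha : a ∈ s) : f a ≤ ∏ i ∈ s, f i := by
  rw [← Finset.mul_prod_erase s f ha]
  exact le_mul_of_one_le_right (le_trans zero_le_one (h a ha))
    (one_le_finprod _ _ fun i hi => h i (Finset.mem_of_mem_erase hi))

lemma one_le_factor (z : ℤ) : (1:ℝ) ≤ if z = 0 then 1 else |(z:ℝ)| := by
  split
  · exact le_refl 1
  · rename_i h
    have : (1:ℤ) ≤ |z| := Int.one_le_abs (by omega)
    calc (1:ℝ) ≤ ((|z|:ℤ):ℝ) := by exact_mod_cast this
    _ = |(z:ℝ)| := by push_cast; ring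

lemma abs_le_factor (z : ℤ) : |(z:ℝ)| ≤ if z = 0 then 1 else |(z:ℝ)| := by
  split
  · rename_i h; simp [h]
  · exact le_refl _

lemma one_le_piPlusZ {n : ℕ} (q0 : ℤ) (q : Fin n → ℤ) : 1 ≤ piPlusZ q0 q := by
  unfold piPlusZ
  have h0 := one_le_factor q0
  have hp : (1:ℝ) ≤ ∏ i, (if q i = 0 then 1 else |((q i : ℤ) : ℝ)|) :=
    one_le_finprod _ _ fun i _ => one_le_factor (q i)
  calc (1:ℝ) ≤ (if q0 = 0 then 1 else |(q0:ℝ)|) := h0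
  _ ≤ _ := le_mul_of_one_le_right (by linarith) hp

lemma piPlusZ_pos {n : ℕ} (q0 : ℤ) (q : Fin n → ℤ) : 0 < piPlusZ q0 q :=
  lt_of_lt_of_le one_pos (one_le_piPlusZ q0 q)

lemma abs_fst_le_piPlusZ {n : ℕ} (q0 : ℤ) (q : Fin n → ℤ) : |(q0:ℝ)| ≤ piPlusZ q0 q := by
  unfold piPlusZ
  have hp : (1:ℝ) ≤ ∏ i, (if q i = 0 then 1 else |((q i : ℤ) : ℝ)|) :=
    one_le_finprod _ _ fun i _ => one_le_factor (q i)
  calc |(q0:ℝ)| ≤ (if q0 = 0 then 1 else |(q0:ℝ)|) := abs_le_factor q0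
  _ ≤ _ := le_mul_of_one_le_right (le_trans zero_le_one (one_le_factor q0)) hp

lemma abs_snd_le_piPlusZ {n : ℕ} (q0 : ℤ) (q : Fin n → ℤ) (i : Fin n) :
    |((q i):ℝ)| ≤ piPlusZ q0 q := by
  unfold piPlusZ
  have h1 : |((q i):ℝ)| ≤ ∏ j, (if q j = 0 then 1 else |((q j : ℤ) : ℝ)|) := by
    calc |((q i):ℝ)| ≤ (if q i = 0 then 1 else |((q i):ℝ)|) := abs_le_factor (q i)
    _ ≤ _ := single_le_finprod _ _ (fun j _ => one_le_factor (q j)) (Finset.mem_univ i)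
  calc |((q i):ℝ)| ≤ _ := h1
  _ ≤ _ := le_mul_of_one_le_left
      (le_trans zero_le_one (one_le_finprod _ _ fun j _ => one_le_factor (q j)))
      (one_le_factor q0)

lemma exists_piPlusZ_gt {n : ℕ} {S : Set (ℤ × (Fin n → ℤ))} (hS : S.Infinite) (P : ℝ) :
    ∃ qq ∈ S, P < piPlusZ qq.1 qq.2 := by
  by_contra hcon
  push_neg at hcon
  set B : ℤ := ⌈P⌉ with hB
  have habs : ∀ z : ℤ, |(z:ℝ)| ≤ P → z ∈ Set.Icc (-B) B := by
    intro z hz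
    have : |z| ≤ B := by
      have h2 : (|z|:ℝ) ≤ (B:ℝ) := by
        rw [hB]
        calc (|z|:ℝ) = |(z:ℝ)| := by simp
        _ ≤ P := hz
        _ ≤ ⌈P⌉ := Int.le_ceil P
      exact_mod_cast h2
    have := abs_le.mp this
    exact ⟨this.1, this.2⟩
  have hsub : S ⊆ (Set.Icc (-B) B) ×ˢ (Set.pi Set.univ fun _ : Fin n => Set.Icc (-B) B) := by
    intro qq hqq
    have h1 : piPlusZ qq.1 qq.2 ≤ P := hcon qq hqq
    refine ⟨habs qq.1 (le_trans (abs_fst_le_piPlusZ qq.1 qq.2) h1), ?_⟩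
    intro i _
    exact habs (qq.2 i) (le_trans (abs_snd_le_piPlusZ qq.1 qq.2 i) h1)
  exact hS (Set.Finite.subset (Set.Finite.prod (Set.finite_Icc _ _)
    (Set.Finite.pi fun _ => Set.finite_Icc _ _)) hsub)

lemma fin_le_ciSup {m : ℕ} (f : Fin m → ℝ) (i : Fin m) : f i ≤ ⨆ j, f j :=
  le_ciSup (Set.Finite.bddAbove (Set.finite_range f)) i

lemma fin_ciSup_exists {m : ℕ} [Nonempty (Fin m)] (f : Fin m → ℝ) : ∃ i, (⨆ j, f j) = f i := by
  obtain ⟨i, hi⟩ := Finite.exists_max f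
  exact ⟨i, le_antisymm (ciSup_le hi) (fin_le_ciSup f i)⟩

lemma rpow_finsum {ι : Type*} (s : Finset ι) (f : ι → ℝ) {x : ℝ} (hx : 0 < x) :
    ∏ i ∈ s, x ^ (f i) = x ^ (∑ i ∈ s, f i) := by
  simp only [Real.rpow_def_of_pos hx, ← Real.exp_sum, ← Finset.mul_sum]

lemma max_zero_sub_eq (a c : ℝ) : max 0 (a - c) = a - min a c := by
  rcases le_total a c with h | h
  · rw [min_eq_left h, max_eq_left (by linarith)]; ring
  · rw [min_eq_right h, max_eq_right (by linarith)]

lemma backward_core {n : ℕ} (hn : 1 ≤ n) (y : Fin n → ℚ_[p]) {γ : ℝ}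
    (hγ0 : 0 < γ) (hγ1 : γ < 1) (cy : ℕ) (hcy : ∀ i, ‖y i‖ ≤ (p:ℝ)^cy)
    (t : Fin (n+1) → ℕ)
    (hdelta : deltaMulti p y t ≤ (p:ℝ) ^ (-(γ * ((∑ i, t i : ℕ) : ℝ)))) :
    ∃ qq : ℤ × (Fin n → ℤ), qq ≠ 0 ∧
      ‖((qq.1 : ℚ_[p]) + ∑ i, (qq.2 i : ℚ_[p]) * y i)‖ ≤ (p:ℝ) ^ (-(((∑ i, t i : ℕ) : ℤ))) ∧
      piPlusZ qq.1 qq.2 ≤ (2*(p:ℝ)^cy)^(n+1) * (p:ℝ) ^ ((1-γ) * ((∑ i, t i : ℕ) : ℝ)) := by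
  haveI : Nonempty (Fin n) := ⟨⟨0, Nat.lt_of_lt_of_le Nat.zero_lt_one hn⟩⟩
  have hP : (1:ℝ) < p := one_lt_p_real p
  have hP0 : (0:ℝ) < p := p_pos_real p
  have hpQ : (0:ℚ) < p := p_pos_rat p
  have hppne : (p:ℚ_[p]) ≠ 0 := by
    exact_mod_cast Nat.cast_ne_zero.mpr (Fact.out : p.Prime).ne_zero
  set T : ℕ := ∑ i, t i with hTdef
  set w : ℝ := (p:ℝ) ^ (-(γ * (T:ℝ))) with hwdef
  have hwpos : 0 < w := Real.rpow_pos_of_pos hP0 _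
  have hlt : deltaMulti p y t < 2 * w := lt_of_le_of_lt hdelta (by linarith)
  rw [deltaMulti] at hlt
  rw [← hTdef] at hlt
  have hSne : Set.Nonempty { c : ℝ | ∃ qt : Fin (n + 1) → ℚ, (∀ i, IsZInvP p (qt i)) ∧ qt ≠ 0 ∧
    c = (⨆ i, (p : ℝ) ^ (-((t i : ℝ))) * |(qt i : ℝ)|) *
        max (‖(((p : ℚ_[p]) ^ T)⁻¹ *
              ((qt 0 : ℚ_[p]) + ∑ i : Fin n, (qt i.succ : ℚ_[p]) * y i))‖)
            (⨆ i : Fin n, ‖((qt i.succ : ℚ_[p]))‖) } :=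
    ⟨_, (fun _ => (1:ℚ)), fun _ => isZInvP_intCast p 1,
      by intro h; simpa using congrFun h 0, rfl⟩
  obtain ⟨c, hcmem, hclt⟩ := exists_lt_of_csInf_lt hSne hlt
  obtain ⟨qt, hZ, hqtne, hceq⟩ := hcmem
  rw [hceq] at hclt
  set A : ℝ := ⨆ i, (p:ℝ) ^ (-((t i : ℝ))) * |(qt i : ℝ)| with hAdef
  set E : ℚ_[p] := ((p : ℚ_[p]) ^ T)⁻¹ *
      ((qt 0 : ℚ_[p]) + ∑ i : Fin n, (qt i.succ : ℚ_[p]) * y i) with hEdef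
  set M : ℝ := ⨆ i : Fin n, ‖((qt i.succ : ℚ_[p]))‖ with hMdef
  have hMnorm : ∀ i : Fin n, ‖(qt i.succ : ℚ_[p])‖ ≤ M := by
    intro i; rw [hMdef]; exact fin_le_ciSup (fun i : Fin n => ‖(qt i.succ : ℚ_[p])‖) i
  -- B > 0
  have hBpos : 0 < max ‖E‖ M := by
    rcases lt_or_ge 0 (max ‖E‖ M) with h | h
    · exact h
    exfalso
    have hE0 : E = 0 := norm_le_zero_iff.mp (le_trans (le_max_left _ _) h)
    have hsucc : ∀ i : Fin n, qt i.succ = 0 := by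
      intro i
      have h1 : ‖(qt i.succ : ℚ_[p])‖ ≤ 0 := le_trans (hMnorm i) (le_trans (le_max_right _ _) h)
      have h2 : (qt i.succ : ℚ_[p]) = 0 := norm_le_zero_iff.mp h1
      exact_mod_cast h2
    have h0 : qt 0 = 0 := by
      have hsum : ∑ i : Fin n, (qt i.succ : ℚ_[p]) * y i = 0 := by
        apply Finset.sum_eq_zero
        intro i _
        rw [show (qt i.succ : ℚ_[p]) = 0 by exact_mod_cast hsucc i, zero_mul]
      rw [hEdef, hsum, add_zero] at hE0
      rcases mul_eq_zero.mp hE0 with h' | h'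
      · exact absurd h' (inv_ne_zero (pow_ne_zero _ hppne))
      · exact_mod_cast h'
    apply hqtne
    funext i
    refine Fin.cases ?_ ?_ i
    · exact h0
    · exact hsucc
  -- B is a power of p
  have hBz : ∃ j : ℤ, max ‖E‖ M = (p:ℝ) ^ j := by
    have hx : ∃ x : ℚ_[p], x ≠ 0 ∧ max ‖E‖ M = ‖x‖ := by
      rcases max_choice ‖E‖ M with h | h
      · refine ⟨E, ?_, h⟩
        rw [h] at hBpos
        exact norm_pos_iff.mp hBpos
      · obtain ⟨i0, hi0⟩ := fin_ciSup_exists (fun i : Fin n => ‖(qt i.succ : ℚ_[p])‖)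
        refine ⟨(qt i0.succ : ℚ_[p]), ?_, by rw [h, hMdef, hi0]⟩
        rw [h, hMdef, hi0] at hBpos
        exact norm_pos_iff.mp hBpos
    obtain ⟨x, hx0, hxeq⟩ := hx
    exact ⟨-x.valuation, by rw [hxeq, Padic.norm_eq_zpow_neg_valuation hx0]⟩
  obtain ⟨j, hj⟩ := hBz
  -- scaled vector
  set qt' : Fin (n+1) → ℚ := fun i => (p:ℚ)^j * qt i with hqt'def
  have hZ' : ∀ i, IsZInvP p (qt' i) := fun i => isZInvP_zpow_mul p j (hZ i)
  have hcast' : ∀ i, ((qt' i : ℚ) : ℚ_[p]) = (p:ℚ_[p])^j * (qt i : ℚ_[p]) := by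
    intro i
    simp only [hqt'def]
    push_cast
    ring
  have hnormpj : ∀ m : ℤ, ‖((p:ℚ_[p]))^m‖ = (p:ℝ) ^ (-m) := by
    intro m; simp [Padic.norm_p_zpow]
  have hnorm' : ∀ i, ‖(qt' i : ℚ_[p])‖ = (p:ℝ)^(-j) * ‖(qt i : ℚ_[p])‖ := by
    intro i; rw [hcast' i, norm_mul, hnormpj]
  have habs' : ∀ i, |(qt' i : ℝ)| = (p:ℝ)^(j:ℤ) * |(qt i : ℝ)| := by
    intro i
    simp only [hqt'def]
    push_cast
    rw [abs_mul, abs_of_pos (zpow_pos hP0 j)]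
  have hE'eq : (qt' 0 : ℚ_[p]) + ∑ i : Fin n, (qt' i.succ : ℚ_[p]) * y i
      = (p:ℚ_[p])^T * ((p:ℚ_[p])^j * E) := by
    have hs : ∑ i : Fin n, (qt' i.succ : ℚ_[p]) * y i
        = (p:ℚ_[p])^j * ∑ i : Fin n, (qt i.succ : ℚ_[p]) * y i := by
      rw [Finset.mul_sum]
      refine Finset.sum_congr rfl fun i _ => ?_
      rw [hcast' i.succ]; ring
    rw [hcast' 0, hs, hEdef]
    field_simp
  have hjE : ‖E‖ ≤ (p:ℝ)^j := hj ▸ le_max_left _ _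
  have hjM : ∀ i : Fin n, ‖(qt i.succ : ℚ_[p])‖ ≤ (p:ℝ)^j :=
    fun i => le_trans (hMnorm i) (hj ▸ le_max_right _ _)
  have hpj_inv : (p:ℝ)^(-j) * (p:ℝ)^(j:ℤ) = 1 := by
    rw [← zpow_add₀ hP0.ne']; simp
  have hE'le : ‖(p:ℚ_[p])^j * E‖ ≤ 1 := by
    rw [norm_mul, hnormpj]
    calc (p:ℝ)^(-j) * ‖E‖ ≤ (p:ℝ)^(-j) * (p:ℝ)^j :=
      mul_le_mul_of_nonneg_left hjE (zpow_pos hP0 _).le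
    _ = 1 := hpj_inv
  have hM'le : ∀ i : Fin n, ‖(qt' i.succ : ℚ_[p])‖ ≤ 1 := by
    intro i
    rw [hnorm' i.succ]
    calc (p:ℝ)^(-j) * ‖(qt i.succ : ℚ_[p])‖ ≤ (p:ℝ)^(-j) * (p:ℝ)^j :=
      mul_le_mul_of_nonneg_left (hjM i) (zpow_pos hP0 _).le
    _ = 1 := hpj_inv
  have hA'lt : ∀ i, (p:ℝ)^(-(t i:ℝ)) * |(qt' i:ℝ)| < 2 * w := by
    intro i
    rw [habs' i]
    have h1 : (p:ℝ)^(-(t i:ℝ)) * |(qt i:ℝ)| ≤ A := by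
      rw [hAdef]; exact fin_le_ciSup (fun i : Fin (n+1) => (p:ℝ)^(-(t i:ℝ)) * |(qt i:ℝ)|) i
    calc (p:ℝ)^(-(t i:ℝ)) * ((p:ℝ)^(j:ℤ) * |(qt i:ℝ)|)
        = (p:ℝ)^(j:ℤ) * ((p:ℝ)^(-(t i:ℝ)) * |(qt i:ℝ)|) := by ring
    _ ≤ (p:ℝ)^(j:ℤ) * A := mul_le_mul_of_nonneg_left h1 (zpow_pos hP0 _).le
    _ = A * max ‖E‖ M := by rw [hj]; ring
    _ < 2 * w := hclt
  -- norm of qt' 0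
  have honele : (1:ℝ) ≤ (p:ℝ)^cy := one_le_pow₀ hP.le
  have hsum_le : ‖∑ i : Fin n, (qt' i.succ : ℚ_[p]) * y i‖ ≤ (p:ℝ)^cy := by
    apply IsUltrametricDist.norm_sum_le_of_forall_le_of_nonneg (by positivity)
    intro i _
    calc ‖(qt' i.succ : ℚ_[p]) * y i‖ = ‖(qt' i.succ : ℚ_[p])‖ * ‖y i‖ := norm_mul _ _
    _ ≤ 1 * (p:ℝ)^cy := mul_le_mul (hM'le i) (hcy i) (norm_nonneg _) zero_le_one
    _ = (p:ℝ)^cy := one_mul _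
  have hqt'0 : ‖(qt' 0 : ℚ_[p])‖ ≤ (p:ℝ)^cy := by
    have hsplit : (qt' 0 : ℚ_[p]) = ((p:ℚ_[p])^T * ((p:ℚ_[p])^j * E))
        - ∑ i : Fin n, (qt' i.succ : ℚ_[p]) * y i := by
      rw [← hE'eq]; ring
    rw [hsplit, sub_eq_add_neg]
    have h1 : ‖(p:ℚ_[p])^T * ((p:ℚ_[p])^j * E)‖ ≤ 1 := by
      rw [norm_mul]
      have h2 : ‖(p:ℚ_[p])^T‖ ≤ 1 := by
        rw [norm_pow, Padic.norm_p]
        exact pow_le_one₀ (by positivity) (inv_le_one_of_one_le₀ hP.le)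
      calc ‖(p:ℚ_[p])^T‖ * ‖(p:ℚ_[p])^j * E‖ ≤ 1 * 1 :=
        mul_le_mul h2 hE'le (norm_nonneg _) zero_le_one
      _ = 1 := one_mul 1
    calc ‖(p:ℚ_[p])^T * ((p:ℚ_[p])^j * E) + -(∑ i : Fin n, (qt' i.succ : ℚ_[p]) * y i)‖
        ≤ max ‖(p:ℚ_[p])^T * ((p:ℚ_[p])^j * E)‖ ‖-(∑ i : Fin n, (qt' i.succ : ℚ_[p]) * y i)‖ :=
          Padic.nonarchimedean _ _
    _ ≤ max 1 ((p:ℝ)^cy) := by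
        apply max_le_max h1
        rw [norm_neg]
        exact hsum_le
    _ = (p:ℝ)^cy := max_eq_right honele
  -- second scaling
  set qt'' : Fin (n+1) → ℚ := fun i => (p:ℚ)^(cy:ℤ) * qt' i with hqt''def
  have hZ'' : ∀ i, IsZInvP p (qt'' i) := fun i => isZInvP_zpow_mul p (cy:ℤ) (hZ' i)
  have hcast'' : ∀ i, ((qt'' i : ℚ) : ℚ_[p]) = (p:ℚ_[p])^(cy:ℤ) * (qt' i : ℚ_[p]) := by
    intro i
    simp only [hqt''def]
    push_cast
    ring
  have habs'' : ∀ i, |(qt'' i : ℝ)| = (p:ℝ)^((cy:ℤ)) * |(qt' i : ℝ)| := by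
    intro i
    simp only [hqt''def]
    push_cast
    rw [abs_mul, abs_of_pos (zpow_pos hP0 _)]
  have hnorm''le : ∀ i, ‖(qt'' i : ℚ_[p])‖ ≤ 1 := by
    intro i
    rw [hcast'' i, norm_mul, hnormpj]
    have hc1 : ((p:ℝ)^(-(cy:ℤ))) ≤ 1 := by
      apply zpow_le_one_of_nonpos₀ hP.le
      omega
    refine Fin.cases ?_ ?_ i
    · calc (p:ℝ)^(-(cy:ℤ)) * ‖(qt' 0 : ℚ_[p])‖ ≤ (p:ℝ)^(-(cy:ℤ)) * (p:ℝ)^cy :=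
        mul_le_mul_of_nonneg_left hqt'0 (zpow_pos hP0 _).le
      _ = 1 := by rw [← zpow_natCast (p:ℝ) cy, ← zpow_add₀ hP0.ne']; simp
    · intro i
      calc (p:ℝ)^(-(cy:ℤ)) * ‖(qt' i.succ : ℚ_[p])‖ ≤ 1 * 1 :=
        mul_le_mul hc1 (hM'le i) (norm_nonneg _) zero_le_one
      _ = 1 := one_mul 1
  -- integrality
  have hint : ∀ i, ∃ z : ℤ, (z:ℚ) = qt'' i := fun i => isZInvP_int_of_norm_le p (hZ'' i) (hnorm''le i)
  choose z hz using hint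
  -- nonvanishing
  have hziff : ∀ i, qt i ≠ 0 → z i ≠ 0 := by
    intro i hi h0
    have : qt'' i = 0 := by rw [← hz i, h0]; simp
    simp only [hqt''def, hqt'def] at this
    rcases mul_eq_zero.mp this with h' | h'
    · exact (zpow_ne_zero _ hpQ.ne') h'
    rcases mul_eq_zero.mp h' with h'' | h''
    · exact (zpow_ne_zero _ hpQ.ne') h''
    · exact hi h''
  obtain ⟨i0, hi0⟩ := Function.ne_iff.mp hqtne
  refine ⟨(z 0, fun i => z i.succ), ?_, ?_, ?_⟩
  · -- nonzero
    intro hzz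
    have hz0 : z 0 = 0 := congrArg Prod.fst hzz
    have hzs : ∀ i : Fin n, z i.succ = 0 := fun i => congrFun (congrArg Prod.snd hzz) i
    have : z i0 ≠ 0 := hziff i0 hi0
    apply this
    refine Fin.cases ?_ ?_ i0
    · exact hz0
    · exact hzs
  · -- error bound
    have herr : ((z 0 : ℤ) : ℚ_[p]) + ∑ i : Fin n, ((z i.succ : ℤ) : ℚ_[p]) * y i
        = (p:ℚ_[p])^(cy:ℤ) * ((p:ℚ_[p])^T * ((p:ℚ_[p])^j * E)) := by
      have hc0 : ((z 0 : ℤ) : ℚ_[p]) = (p:ℚ_[p])^(cy:ℤ) * (qt' 0 : ℚ_[p]) := by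
        rw [← hcast'' 0, ← hz 0]
        push_cast
        ring
      have hcs : ∀ i : Fin n, ((z i.succ : ℤ) : ℚ_[p]) = (p:ℚ_[p])^(cy:ℤ) * (qt' i.succ : ℚ_[p]) := by
        intro i
        rw [← hcast'' i.succ, ← hz i.succ]
        push_cast
        ring
      calc ((z 0 : ℤ) : ℚ_[p]) + ∑ i : Fin n, ((z i.succ : ℤ) : ℚ_[p]) * y i
          = (p:ℚ_[p])^(cy:ℤ) * ((qt' 0 : ℚ_[p]) + ∑ i : Fin n, (qt' i.succ : ℚ_[p]) * y i) := by
            rw [mul_add, Finset.mul_sum, hc0]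
            congr 1
            refine Finset.sum_congr rfl fun i _ => ?_
            rw [hcs i]; ring
      _ = (p:ℚ_[p])^(cy:ℤ) * ((p:ℚ_[p])^T * ((p:ℚ_[p])^j * E)) := by rw [hE'eq]
    rw [herr, norm_mul, norm_mul, hnormpj, norm_pow, Padic.norm_p]
    have hb1 : ‖(p:ℚ_[p])^j * E‖ ≤ 1 := hE'le
    have hb2 : ((p:ℝ)⁻¹)^T = (p:ℝ)^(-(T:ℤ)) := by
      rw [← zpow_natCast (p:ℝ)⁻¹ T, inv_zpow, ← zpow_neg]
    rw [hb2]
    have hc1 : ((p:ℝ)^(-(cy:ℤ))) ≤ 1 := by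
      apply zpow_le_one_of_nonpos₀ hP.le
      omega
    calc (p:ℝ)^(-(cy:ℤ)) * ((p:ℝ)^(-(T:ℤ)) * ‖(p:ℚ_[p])^j * E‖)
        ≤ 1 * ((p:ℝ)^(-(T:ℤ)) * 1) := by
          apply mul_le_mul hc1 _ (by positivity) zero_le_one
          exact mul_le_mul_of_nonneg_left hb1 (zpow_pos hP0 _).le
    _ = (p:ℝ)^(-(T:ℤ)) := by ring
  · -- piPlusZ bound
    have hfin : piPlusZ (z 0) (fun i => z i.succ)
        = ∏ i : Fin (n+1), (if z i = 0 then 1 else |(z i:ℝ)|) := by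
      rw [piPlusZ, Fin.prod_univ_succ]
    set m : Fin (n+1) → ℝ := fun i => max 0 ((t i:ℝ) - γ * T) with hmdef
    have hm0 : ∀ i, 0 ≤ m i := fun i => le_max_left _ _
    have hzabs : ∀ i, |(z i : ℝ)| ≤ 2 * (p:ℝ)^cy * (p:ℝ) ^ (m i) := by
      intro i
      have h1 : |(z i : ℝ)| = |(qt'' i : ℝ)| := by
        rw [show ((z i : ℤ):ℝ) = ((qt'' i : ℚ):ℝ) by rw [← hz i]; push_cast; ring]
      have h2 : |(qt' i : ℝ)| < (p:ℝ)^((t i : ℝ)) * (2 * w) := by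
        have := hA'lt i
        have hgt : (0:ℝ) < (p:ℝ)^((t i:ℝ)) := Real.rpow_pos_of_pos hP0 _
        have hinv : (p:ℝ)^(-(t i:ℝ)) * (p:ℝ)^((t i:ℝ)) = 1 := by
          rw [← Real.rpow_add hP0]; simp
        nlinarith [abs_nonneg (qt' i : ℝ), Real.rpow_pos_of_pos hP0 (-(t i:ℝ))]
      rw [h1, habs'' i]
      have h3 : (p:ℝ)^((cy:ℤ)) * |(qt' i : ℝ)| ≤ (p:ℝ)^((cy:ℤ)) * ((p:ℝ)^((t i : ℝ)) * (2 * w)) :=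
        mul_le_mul_of_nonneg_left h2.le (zpow_pos hP0 _).le
      have h4 : (p:ℝ)^((t i : ℝ)) * w ≤ (p:ℝ) ^ (m i) := by
        rw [hwdef, ← Real.rpow_add hP0]
        apply Real.rpow_le_rpow_of_exponent_le hP.le
        exact le_max_right _ _
      have h5 : (p:ℝ)^((cy:ℤ)) = (p:ℝ)^(cy:ℕ) := by
        rw [zpow_natCast]
      nlinarith [Real.rpow_pos_of_pos hP0 (m i), pow_pos hP0 cy]
    have hfac : ∀ i : Fin (n+1), (if z i = 0 then 1 else |(z i:ℝ)|)
        ≤ 2 * (p:ℝ)^cy * (p:ℝ) ^ (m i) := by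
      intro i
      have hrge1 : (1:ℝ) ≤ 2 * (p:ℝ)^cy * (p:ℝ) ^ (m i) := by
        have : (1:ℝ) ≤ (p:ℝ) ^ (m i) := Real.one_le_rpow hP.le (hm0 i)
        nlinarith
      split
      · exact hrge1
      · exact hzabs i
    have hsum_m : ∑ i, m i ≤ (1 - γ) * T := by
      have heq : ∀ i ∈ Finset.univ, m i = (t i : ℝ) - min ((t i : ℝ)) (γ * T) := by
        intro i _
        rw [hmdef]
        exact max_zero_sub_eq _ _
      rw [Finset.sum_congr rfl heq, Finset.sum_sub_distrib]
      have hTr : ∑ i, ((t i : ℕ) : ℝ) = (T:ℝ) := by rw [hTdef]; push_cast; ring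
      have hγT : 0 ≤ γ * T := by positivity
      have hmin := min_sum_le Finset.univ (fun i => ((t i:ℕ):ℝ)) (γ * T)
        (fun i _ => by positivity) hγT
      rw [hTr] at hmin
      have hminT : min ((T:ℝ)) (γ * T) = γ * T := by
        apply min_eq_right
        nlinarith [Nat.cast_nonneg (α := ℝ) T]
      rw [hminT] at hmin
      have := hmin
      nlinarith [hTr]
    calc piPlusZ (z 0) (fun i => z i.succ)
        = ∏ i : Fin (n+1), (if z i = 0 then 1 else |(z i:ℝ)|) := hfin
    _ ≤ ∏ i : Fin (n+1), (2 * (p:ℝ)^cy * (p:ℝ) ^ (m i)) := by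
        apply Finset.prod_le_prod
        · intro i _
          split
          · norm_num
          · exact abs_nonneg _
        · intro i _
          exact hfac i
    _ = (2*(p:ℝ)^cy)^(n+1) * ∏ i : Fin (n+1), (p:ℝ) ^ (m i) := by
        rw [Finset.prod_mul_distrib, Finset.prod_const]
        congr 1
        simp
    _ ≤ (2*(p:ℝ)^cy)^(n+1) * (p:ℝ) ^ ((1-γ) * (T:ℝ)) := by
        apply mul_le_mul_of_nonneg_left _ (by positivity)
        rw [rpow_finsum _ _ hP0]
        exact Real.rpow_le_rpow_of_exponent_le hP.le hsum_m

lemma zero_sum_case {n : ℕ} (y : Fin n → ℚ_[p]) (qq : ℤ × (Fin n → ℤ)) (hqq : qq ≠ 0)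
    (hz : (qq.1:ℚ_[p]) + ∑ i, (qq.2 i:ℚ_[p]) * y i = 0) : IsVWMA p y := by
  refine ⟨1, one_pos, ?_⟩
  have hcase : qq.1 ≠ 0 ∨ ∃ i, qq.2 i ≠ 0 := by
    by_contra h
    push_neg at h
    exact hqq (Prod.ext_iff.mpr ⟨h.1, funext h.2⟩)
  apply Set.infinite_of_injective_forall_mem
    (f := fun k : ℕ => ((((k:ℤ)+1) * qq.1, fun i => ((k:ℤ)+1) * qq.2 i) : ℤ × (Fin n → ℤ)))
  · intro a b hab
    have h1 : ((a:ℤ)+1) * qq.1 = ((b:ℤ)+1) * qq.1 := congrArg Prod.fst hab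
    have h2 : ∀ i, ((a:ℤ)+1) * qq.2 i = ((b:ℤ)+1) * qq.2 i :=
      fun i => congrFun (congrArg Prod.snd hab) i
    rcases hcase with h | ⟨i, h⟩
    · have := mul_right_cancel₀ h h1
      omega
    · have := mul_right_cancel₀ h (h2 i)
      omega
  · intro k
    simp only [Set.mem_setOf_eq]
    have hk : ((((k:ℤ)+1) * qq.1 : ℤ):ℚ_[p]) + ∑ i, ((((k:ℤ)+1) * qq.2 i : ℤ):ℚ_[p]) * y i
        = ((k:ℚ_[p])+1) * ((qq.1:ℚ_[p]) + ∑ i, (qq.2 i:ℚ_[p]) * y i) := by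
      push_cast
      rw [mul_add, Finset.mul_sum]
      congr 1
      exact Finset.sum_congr rfl fun i _ => by ring
    rw [hk, hz, mul_zero, norm_zero]
    exact Real.rpow_nonneg (le_of_lt (piPlusZ_pos _ _)) _

lemma backward {n : ℕ} (hn : 1 ≤ n) (y : Fin n → ℚ_[p])
    (h : ∃ γ : ℝ, 0 < γ ∧ γ < 1 / ((n : ℝ) + 1) ∧
      ∀ N : ℕ, ∃ t : Fin (n + 1) → ℕ, N ≤ ∑ i, t i ∧
        deltaMulti p y t ≤ (p : ℝ) ^ (-(γ * ((∑ i, t i : ℕ) : ℝ)))) :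
    IsVWMA p y := by
  obtain ⟨γ, hγ0, hγn, hT⟩ := h
  by_cases hzc : ∃ qq : ℤ × (Fin n → ℤ), qq ≠ 0 ∧ (qq.1:ℚ_[p]) + ∑ i, (qq.2 i:ℚ_[p]) * y i = 0
  · obtain ⟨qq, h1, h2⟩ := hzc
    exact zero_sum_case p y qq h1 h2
  push_neg at hzc
  have hP : (1:ℝ) < p := one_lt_p_real p
  have hP0 : (0:ℝ) < p := p_pos_real p
  have hγ1 : γ < 1 := by
    have hle : 1 / ((n:ℝ)+1) ≤ 1 := by
      rw [div_le_one (by positivity)]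
      nlinarith [Nat.cast_nonneg (α := ℝ) n]
    linarith
  obtain ⟨cy, hcy⟩ := exists_norm_tuple_le p n y
  set C : ℝ := (2*(p:ℝ)^cy)^(n+1) with hCdef
  have hpcy1 : (1:ℝ) ≤ (p:ℝ)^cy := one_le_pow₀ hP.le
  have hC1 : 1 ≤ C := one_le_pow₀ (by nlinarith)
  have hC0 : 0 < C := lt_of_lt_of_le one_pos hC1
  set ε : ℝ := γ/2 / (1-γ) with hεdef
  have hε0 : 0 < ε := div_pos (by linarith) (by linarith)
  have hkey : (1-γ) * (1+ε) = 1 - γ/2 := by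
    have hne : (1-γ) ≠ 0 := by linarith
    have hstep : (1-γ) * ε = γ/2 := by rw [hεdef]; field_simp
    calc (1-γ)*(1+ε) = (1-γ) + (1-γ)*ε := by ring
    _ = (1-γ) + γ/2 := by rw [hstep]
    _ = 1 - γ/2 := by ring
  refine ⟨ε, hε0, ?_⟩
  by_contra hSfin
  rw [Set.not_infinite] at hSfin
  have hb1 : 1 < (p:ℝ) ^ (γ/2) := by
    rw [show (1:ℝ) = (p:ℝ) ^ (0:ℝ) by simp]
    exact Real.rpow_lt_rpow_left_iff hP |>.mpr (by linarith)
  obtain ⟨T0, hT0⟩ := pow_unbounded_of_one_lt (C ^ (1+ε)) hb1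
  -- claim: for every N we may construct a small solution in the set
  have claim : ∀ N : ℕ, ∃ qq : ℤ × (Fin n → ℤ), qq ≠ 0 ∧
      qq ∈ {qq : ℤ × (Fin n → ℤ) |
        ‖((qq.1 : ℚ_[p]) + ∑ i, (qq.2 i : ℚ_[p]) * y i)‖ ≤
          (piPlusZ qq.1 qq.2) ^ (-(1 + ε))} ∧
      ‖((qq.1 : ℚ_[p]) + ∑ i, (qq.2 i : ℚ_[p]) * y i)‖ ≤ (p:ℝ) ^ (-(N:ℤ)) := by
    intro N
    obtain ⟨t, htN, htd⟩ := hT (max N T0)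
    obtain ⟨qq, hqq0, herr, hpi⟩ := backward_core p hn y hγ0 hγ1 cy hcy t htd
    set T : ℕ := ∑ i, t i with hTdef
    have hTN : N ≤ T := le_trans (le_max_left _ _) htN
    have hTT0 : T0 ≤ T := le_trans (le_max_right _ _) htN
    have hπpos : 0 < piPlusZ qq.1 qq.2 := piPlusZ_pos _ _
    have hπ1 : 1 ≤ piPlusZ qq.1 qq.2 := one_le_piPlusZ _ _
    -- the key size estimate
    have hsize : (piPlusZ qq.1 qq.2) ^ ((1:ℝ)+ε) ≤ (p:ℝ) ^ (T:ℝ) := by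
      have h1 : (piPlusZ qq.1 qq.2) ^ ((1:ℝ)+ε) ≤ (C * (p:ℝ) ^ ((1-γ) * (T:ℝ))) ^ ((1:ℝ)+ε) :=
        Real.rpow_le_rpow (le_of_lt hπpos) hpi (by linarith)
      have h2 : (C * (p:ℝ) ^ ((1-γ) * (T:ℝ))) ^ ((1:ℝ)+ε)
          = C ^ ((1:ℝ)+ε) * (p:ℝ) ^ ((1 - γ/2) * (T:ℝ)) := by
        rw [Real.mul_rpow hC0.le (Real.rpow_nonneg hP0.le _), ← Real.rpow_mul hP0.le]
        congr 2
        rw [← hkey]; ring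
      have h3 : C ^ ((1:ℝ)+ε) ≤ (p:ℝ) ^ ((γ/2) * (T:ℝ)) := by
        calc C ^ ((1:ℝ)+ε) ≤ ((p:ℝ) ^ (γ/2)) ^ T0 := hT0.le
        _ ≤ ((p:ℝ) ^ (γ/2)) ^ T := pow_le_pow_right₀ hb1.le hTT0
        _ = (p:ℝ) ^ ((γ/2) * (T:ℝ)) := by
            rw [← Real.rpow_natCast ((p:ℝ) ^ (γ/2)) T, ← Real.rpow_mul hP0.le]
      have h4 : (p:ℝ) ^ ((γ/2) * (T:ℝ)) * (p:ℝ) ^ ((1 - γ/2) * (T:ℝ)) = (p:ℝ) ^ (T:ℝ) := by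
        rw [← Real.rpow_add hP0]
        congr 1
        ring
      calc (piPlusZ qq.1 qq.2) ^ ((1:ℝ)+ε) ≤ (C * (p:ℝ) ^ ((1-γ) * (T:ℝ))) ^ ((1:ℝ)+ε) := h1
      _ = C ^ ((1:ℝ)+ε) * (p:ℝ) ^ ((1 - γ/2) * (T:ℝ)) := h2
      _ ≤ (p:ℝ) ^ ((γ/2) * (T:ℝ)) * (p:ℝ) ^ ((1 - γ/2) * (T:ℝ)) :=
          mul_le_mul_of_nonneg_right h3 (Real.rpow_nonneg hP0.le _)
      _ = (p:ℝ) ^ (T:ℝ) := h4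
    have hPT : (p:ℝ) ^ (-(T:ℤ)) ≤ (piPlusZ qq.1 qq.2) ^ (-((1:ℝ)+ε)) := by
      rw [Real.rpow_neg hπpos.le, zpow_neg, zpow_natCast]
      apply inv_anti₀ (Real.rpow_pos_of_pos hπpos _)
      calc (piPlusZ qq.1 qq.2) ^ ((1:ℝ)+ε) ≤ (p:ℝ) ^ (T:ℝ) := hsize
      _ = (p:ℝ) ^ (T:ℕ) := by rw [Real.rpow_natCast]
    refine ⟨qq, hqq0, ?_, ?_⟩
    · simp only [Set.mem_setOf_eq]
      calc ‖((qq.1 : ℚ_[p]) + ∑ i, (qq.2 i : ℚ_[p]) * y i)‖ ≤ (p:ℝ) ^ (-(T:ℤ)) := herr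
      _ ≤ (piPlusZ qq.1 qq.2) ^ (-((1:ℝ)+ε)) := hPT
      _ = (piPlusZ qq.1 qq.2) ^ (-(1+ε)) := by norm_num
    · calc ‖((qq.1 : ℚ_[p]) + ∑ i, (qq.2 i : ℚ_[p]) * y i)‖ ≤ (p:ℝ) ^ (-(T:ℤ)) := herr
      _ ≤ (p:ℝ) ^ (-(N:ℤ)) := by
          apply zpow_le_zpow_right₀ hP.le
          omega
  -- derive the contradiction from finiteness
  obtain ⟨qq1, hqq1ne, hqq1mem, _⟩ := claim 0
  set D : Set (ℤ × (Fin n → ℤ)) := {qq : ℤ × (Fin n → ℤ) |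
        ‖((qq.1 : ℚ_[p]) + ∑ i, (qq.2 i : ℚ_[p]) * y i)‖ ≤
          (piPlusZ qq.1 qq.2) ^ (-(1 + ε))} \ {0} with hDdef
  have hDfin : D.Finite := hSfin.diff
  have hDne : D.Nonempty := ⟨qq1, hqq1mem, hqq1ne⟩
  obtain ⟨qmin, hqminD, hmin⟩ := Set.exists_min_image D
    (fun qq => ‖((qq.1 : ℚ_[p]) + ∑ i, (qq.2 i : ℚ_[p]) * y i)‖) hDfin hDne
  have hqminne : qmin ≠ 0 := hqminD.2
  have hpos : 0 < ‖((qmin.1 : ℚ_[p]) + ∑ i, (qmin.2 i : ℚ_[p]) * y i)‖ := by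
    rw [norm_pos_iff]
    exact hzc qmin hqminne
  obtain ⟨K, hK⟩ := pow_unbounded_of_one_lt (1/‖((qmin.1 : ℚ_[p]) + ∑ i, (qmin.2 i : ℚ_[p]) * y i)‖) hP
  have hKlt : (p:ℝ) ^ (-(K:ℤ)) < ‖((qmin.1 : ℚ_[p]) + ∑ i, (qmin.2 i : ℚ_[p]) * y i)‖ := by
    rw [zpow_neg, zpow_natCast, inv_eq_one_div, div_lt_iff₀ (pow_pos hP0 K)]
    rw [div_lt_iff₀ hpos] at hK
    linarith
  obtain ⟨qq2, hqq2ne, hqq2mem, hqq2err⟩ := claim K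
  have : qq2 ∈ D := ⟨hqq2mem, hqq2ne⟩
  have hge := hmin qq2 this
  linarith [le_trans hge (le_trans hqq2err hKlt.le)]

lemma int_abs_one_le {z : ℤ} (h : z ≠ 0) : (1:ℝ) ≤ |(z:ℝ)| := by
  have : (1:ℤ) ≤ |z| := Int.one_le_abs (by omega)
  calc (1:ℝ) ≤ ((|z|:ℤ):ℝ) := by exact_mod_cast this
  _ = |(z:ℝ)| := by simp

lemma forward {n : ℕ} (hn : 1 ≤ n) (y : Fin n → ℚ_[p]) (h : IsVWMA p y) :
    ∃ γ : ℝ, 0 < γ ∧ γ < 1 / ((n : ℝ) + 1) ∧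
      ∀ N : ℕ, ∃ t : Fin (n + 1) → ℕ, N ≤ ∑ i, t i ∧
        deltaMulti p y t ≤ (p : ℝ) ^ (-(γ * ((∑ i, t i : ℕ) : ℝ))) := by
  obtain ⟨ε, hε0, hinf⟩ := h
  have hP : (1:ℝ) < p := one_lt_p_real p
  have hP0 : (0:ℝ) < p := p_pos_real p
  haveI : Nonempty (Fin n) := ⟨⟨0, Nat.lt_of_lt_of_le Nat.zero_lt_one hn⟩⟩
  set γ : ℝ := ε / (4*((n:ℝ)+1)*(1+ε)) with hγdef
  have hn1 : (0:ℝ) < (n:ℝ)+1 := by positivity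
  have hγ0 : 0 < γ := by
    apply div_pos hε0
    positivity
  have hγn : γ < 1/((n:ℝ)+1) := by
    rw [hγdef, div_lt_div_iff₀ (by positivity) hn1]
    nlinarith
  have hγε : γ * (1+ε) = ε/(4*((n:ℝ)+1)) := by
    rw [hγdef]
    field_simp
  refine ⟨γ, hγ0, hγn, ?_⟩
  intro N
  set L0 : ℝ := max (4*((n:ℝ)+1)/ε) (2*((n:ℝ)+1)*((N:ℝ)+1)/ε) with hL0def
  have hL0pos : 0 < L0 := lt_of_lt_of_le (by positivity) (le_max_left _ _)
  obtain ⟨qq, hqqmem, hqqbig⟩ := exists_piPlusZ_gt hinf ((p:ℝ) ^ L0)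
  have hPi1 : 1 ≤ piPlusZ qq.1 qq.2 := one_le_piPlusZ _ _
  have hPi0 : 0 < piPlusZ qq.1 qq.2 := lt_of_lt_of_le one_pos hPi1
  set L : ℝ := Real.logb p (piPlusZ qq.1 qq.2) with hLdef
  have hL0L : L0 < L := by
    rw [hLdef]
    calc L0 = Real.logb p ((p:ℝ) ^ L0) := (Real.logb_rpow hP0 (by linarith)).symm
    _ < Real.logb p (piPlusZ qq.1 qq.2) :=
        Real.logb_lt_logb hP (Real.rpow_pos_of_pos hP0 _) hqqbig
  have hLpos : 0 < L := lt_trans hL0pos hL0L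
  have hεL4 : 4*((n:ℝ)+1) ≤ ε * L := by
    have h1 : 4*((n:ℝ)+1)/ε ≤ L0 := le_max_left _ _
    rw [div_le_iff₀ hε0] at h1
    nlinarith
  have hεLN : 2*((n:ℝ)+1)*((N:ℝ)+1) < ε * L := by
    have h1 : 2*((n:ℝ)+1)*((N:ℝ)+1)/ε ≤ L0 := le_max_right _ _
    have h2 : 2*((n:ℝ)+1)*((N:ℝ)+1)/ε < L := lt_of_le_of_lt h1 hL0L
    rw [div_lt_iff₀ hε0] at h2
    nlinarith
  -- the coordinates
  set ζ : Fin (n+1) → ℤ := Fin.cons qq.1 qq.2 with hζdef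
  set s : ℕ := ⌊ε * L / (2*((n:ℝ)+1))⌋₊ with hsdef
  have hsle : (s:ℝ) ≤ ε * L / (2*((n:ℝ)+1)) := Nat.floor_le (by positivity)
  have hsge : ε * L / (2*((n:ℝ)+1)) - 1 < (s:ℝ) := by
    have := Nat.lt_floor_add_one (ε * L / (2*((n:ℝ)+1)))
    linarith
  set t : Fin (n+1) → ℕ := fun i => if ζ i = 0 then 0 else ⌈Real.logb p |(ζ i:ℝ)|⌉₊ + s
    with htdef
  set T : ℕ := ∑ i, t i with hTdef
  have hζprod : piPlusZ qq.1 qq.2 = ∏ i : Fin (n+1), (if ζ i = 0 then 1 else |((ζ i:ℤ):ℝ)|) := by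
    rw [Fin.prod_univ_succ, piPlusZ]
    simp only [hζdef, Fin.cons_zero, Fin.cons_succ]
  have hζlogb : ∀ i, ζ i ≠ 0 → 0 ≤ Real.logb p |(ζ i:ℝ)| :=
    fun i hi => Real.logb_nonneg hP (int_abs_one_le hi)
  -- (b) log sum
  have hlogsum : L = ∑ i : Fin (n+1), (if ζ i = 0 then 0 else Real.logb p |((ζ i:ℤ):ℝ)|) := by
    rw [hLdef, hζprod, Real.logb, Real.log_prod (fun i _ => by
      split
      · norm_num
      · rename_i hi
        have := int_abs_one_le hi
        positivity), Finset.sum_div]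
    refine Finset.sum_congr rfl fun i _ => ?_
    split
    · simp
    · rfl
  -- (e) T bound
  have hTle : (T:ℝ) ≤ (1+ε) * L := by
    have hterm : ∀ i : Fin (n+1), (t i : ℝ) ≤
        (if ζ i = 0 then 0 else Real.logb p |((ζ i:ℤ):ℝ)|) + (1 + (s:ℝ)) := by
      intro i
      by_cases hzi : ζ i = 0
      · rw [htdef]
        simp only [if_pos hzi]
        push_cast
        have h0s : (0:ℝ) ≤ (s:ℝ) := Nat.cast_nonneg s
        linarith
      · rw [htdef]
        simp only [if_neg hzi]
        push_cast
        have := Nat.ceil_lt_add_one (hζlogb i hzi)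
        linarith
    have hsum : (T:ℝ) ≤ L + ((n:ℝ)+1) * (1 + (s:ℝ)) := by
      have h1 : (T:ℝ) = ∑ i : Fin (n+1), (t i : ℝ) := by rw [hTdef]; push_cast; ring
      rw [h1, hlogsum]
      calc ∑ i : Fin (n+1), (t i : ℝ)
          ≤ ∑ i : Fin (n+1), ((if ζ i = 0 then 0 else Real.logb p |((ζ i:ℤ):ℝ)|) + (1 + (s:ℝ))) :=
            Finset.sum_le_sum fun i _ => hterm i
      _ = (∑ i : Fin (n+1), (if ζ i = 0 then 0 else Real.logb p |((ζ i:ℤ):ℝ)|))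
            + ((n:ℝ)+1) * (1 + (s:ℝ)) := by
          rw [Finset.sum_add_distrib, Finset.sum_const]
          simp only [Finset.card_univ, Fintype.card_fin, nsmul_eq_mul]
          push_cast
          ring
    have hns : ((n:ℝ)+1) * (1 + (s:ℝ)) ≤ ε * L := by
      have h2 : ((n:ℝ)+1) * (s:ℝ) ≤ ε * L / 2 := by
        calc ((n:ℝ)+1) * (s:ℝ) ≤ ((n:ℝ)+1) * (ε * L / (2*((n:ℝ)+1))) :=
          mul_le_mul_of_nonneg_left hsle (by positivity)
        _ = ε * L / 2 := by field_simp
      nlinarith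
    linarith
  -- (f) γ T ≤ s
  have hγTs : γ * (T:ℝ) ≤ (s:ℝ) := by
    have h1 : γ * (T:ℝ) ≤ γ * ((1+ε) * L) := mul_le_mul_of_nonneg_left hTle hγ0.le
    have h2 : γ * ((1+ε) * L) = ε * L / (4*((n:ℝ)+1)) := by
      calc γ * ((1+ε) * L) = (γ * (1+ε)) * L := by ring
      _ = (ε/(4*((n:ℝ)+1))) * L := by rw [hγε]
      _ = ε * L / (4*((n:ℝ)+1)) := by ring
    have h3 : ε * L / (4*((n:ℝ)+1)) + 1 ≤ ε * L / (2*((n:ℝ)+1)) := by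
      rw [div_add' _ _ _ (by positivity), div_le_div_iff₀ (by positivity) (by positivity)]
      nlinarith
    linarith
  -- (g) N ≤ T
  have hjex : ∃ j, ζ j ≠ 0 := by
    by_contra hcon
    push_neg at hcon
    have : piPlusZ qq.1 qq.2 = 1 := by
      rw [hζprod]
      apply Finset.prod_eq_one
      intro i _
      rw [if_pos (hcon i)]
    rw [this] at hqqbig
    have : (1:ℝ) < (p:ℝ)^L0 := Real.one_lt_rpow_iff_of_pos hP0 |>.mpr (Or.inl ⟨hP, hL0pos⟩)
    linarith
  obtain ⟨j, hj⟩ := hjex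
  have hNs : (N:ℝ) < (s:ℝ) := by
    have h1 : (N:ℝ) + 1 < ε * L / (2*((n:ℝ)+1)) := by
      rw [lt_div_iff₀ (by positivity)]
      nlinarith
    linarith
  have hNT : N ≤ T := by
    have hsT : s ≤ T := by
      have h1 : s ≤ t j := by
        rw [htdef]
        simp only [if_neg hj]
        omega
      calc s ≤ t j := h1
      _ ≤ T := Finset.single_le_sum (f := fun i => t i) (fun i _ => Nat.zero_le _)
          (Finset.mem_univ j)
    have : N < s := by exact_mod_cast hNs
    omega
  refine ⟨t, hNT, ?_⟩
  -- now the delta bound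
  have habs_le : ∀ i, ζ i ≠ 0 → |((ζ i:ℤ):ℝ)| ≤ (p:ℝ) ^ ((t i:ℝ) - (s:ℝ)) := by
    intro i hi
    have h1 : |((ζ i:ℤ):ℝ)| = (p:ℝ) ^ (Real.logb p |((ζ i:ℤ):ℝ)|) :=
      (Real.rpow_logb hP0 hP.ne' (lt_of_lt_of_le one_pos (int_abs_one_le hi))).symm
    rw [h1]
    apply Real.rpow_le_rpow_of_exponent_le hP.le
    rw [htdef]
    simp only [if_neg hi]
    push_cast
    have := Nat.le_ceil (Real.logb p |((ζ i:ℤ):ℝ)|)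
    linarith
  -- the element of the delta set
  simp only [Set.mem_setOf_eq] at hqqmem
  set qt : Fin (n+1) → ℚ := fun i => ((ζ i : ℤ) : ℚ) with hqtdef
  have hqtne : qt ≠ 0 := by
    intro hcon
    apply hj
    have := congrFun hcon j
    simp only [hqtdef, Pi.zero_apply] at this
    exact_mod_cast this
  have e0 : ((qt 0 : ℚ) : ℚ_[p]) = (qq.1 : ℚ_[p]) := by
    simp [hqtdef, hζdef]
  have es : ∀ i : Fin n, ((qt i.succ : ℚ) : ℚ_[p]) = (qq.2 i : ℚ_[p]) := by
    intro i
    simp [hqtdef, hζdef]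
  set A : ℝ := ⨆ i, (p:ℝ)^(-(t i:ℝ)) * |(qt i:ℝ)| with hAdef
  set B : ℝ := max ‖((p:ℚ_[p])^T)⁻¹ * ((qt 0:ℚ_[p]) + ∑ i : Fin n, (qt i.succ:ℚ_[p]) * y i)‖
      (⨆ i : Fin n, ‖(qt i.succ:ℚ_[p])‖) with hBdef
  have hBnonneg : 0 ≤ B := by
    rw [hBdef]
    exact le_trans (norm_nonneg _) (le_max_left _ _)
  -- A bound
  have hA : A ≤ (p:ℝ)^(-(s:ℝ)) := by
    rw [hAdef]
    apply ciSup_le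
    intro i
    by_cases hzi : ζ i = 0
    · have hz0 : (qt i : ℝ) = 0 := by simp [hqtdef, hzi]
      rw [hz0, abs_zero, mul_zero]
      positivity
    · have h1 : |(qt i:ℝ)| = |((ζ i:ℤ):ℝ)| := by
        simp [hqtdef]
      rw [h1]
      calc (p:ℝ)^(-(t i:ℝ)) * |((ζ i:ℤ):ℝ)| ≤ (p:ℝ)^(-(t i:ℝ)) * (p:ℝ)^((t i:ℝ)-(s:ℝ)) :=
        mul_le_mul_of_nonneg_left (habs_le i hzi) (by positivity)
      _ = (p:ℝ)^(-(s:ℝ)) := by rw [← Real.rpow_add hP0]; congr 1; ring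
  -- B bound
  have hPieq : (p:ℝ) ^ L = piPlusZ qq.1 qq.2 := Real.rpow_logb hP0 hP.ne' hPi0
  have h5 : ((p:ℝ)^(T:ℕ)) ≤ (piPlusZ qq.1 qq.2) ^ ((1:ℝ)+ε) := by
    calc ((p:ℝ)^(T:ℕ)) = (p:ℝ) ^ ((T:ℕ):ℝ) := (Real.rpow_natCast _ _).symm
    _ ≤ (p:ℝ) ^ ((1+ε) * L) := Real.rpow_le_rpow_of_exponent_le hP.le hTle
    _ = ((p:ℝ) ^ L) ^ ((1:ℝ)+ε) := by
        rw [← Real.rpow_mul hP0.le]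
        congr 1
        ring
    _ = (piPlusZ qq.1 qq.2) ^ ((1:ℝ)+ε) := by rw [hPieq]
  have hB : B ≤ 1 := by
    rw [hBdef]
    apply max_le
    · have hsum : ∑ i : Fin n, (qt i.succ:ℚ_[p]) * y i = ∑ i : Fin n, (qq.2 i:ℚ_[p]) * y i :=
        Finset.sum_congr rfl fun i _ => by rw [es i]
      rw [e0, hsum, norm_mul, norm_inv, norm_pow, Padic.norm_p, inv_pow, inv_inv]
      calc (p:ℝ)^(T:ℕ) * ‖(qq.1:ℚ_[p]) + ∑ i : Fin n, (qq.2 i:ℚ_[p]) * y i‖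
          ≤ (p:ℝ)^(T:ℕ) * (piPlusZ qq.1 qq.2) ^ (-(1+ε)) :=
            mul_le_mul_of_nonneg_left hqqmem (by positivity)
      _ = (p:ℝ)^(T:ℕ) / (piPlusZ qq.1 qq.2) ^ ((1:ℝ)+ε) := by
          rw [show (-(1+ε)) = -((1:ℝ)+ε) by ring, Real.rpow_neg hPi0.le]
          ring
      _ ≤ 1 := by
          rw [div_le_one (Real.rpow_pos_of_pos hPi0 _)]
          exact h5
    · apply ciSup_le
      intro i
      rw [es i]
      exact Padic.norm_int_le_one _
  -- finish
  have hmem : A * B ∈ { c : ℝ | ∃ qt : Fin (n + 1) → ℚ, (∀ i, IsZInvP p (qt i)) ∧ qt ≠ 0 ∧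
    c = (⨆ i, (p : ℝ) ^ (-((t i : ℝ))) * |(qt i : ℝ)|) *
        max (‖(((p : ℚ_[p]) ^ T)⁻¹ *
              ((qt 0 : ℚ_[p]) + ∑ i : Fin n, (qt i.succ : ℚ_[p]) * y i))‖)
            (⨆ i : Fin n, ‖((qt i.succ : ℚ_[p]))‖) } := by
    exact ⟨qt, fun i => isZInvP_intCast p _, hqtne, by rw [hAdef, hBdef]⟩
  have hbdd : BddBelow { c : ℝ | ∃ qt : Fin (n + 1) → ℚ, (∀ i, IsZInvP p (qt i)) ∧ qt ≠ 0 ∧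
    c = (⨆ i, (p : ℝ) ^ (-((t i : ℝ))) * |(qt i : ℝ)|) *
        max (‖(((p : ℚ_[p]) ^ T)⁻¹ *
              ((qt 0 : ℚ_[p]) + ∑ i : Fin n, (qt i.succ : ℚ_[p]) * y i))‖)
            (⨆ i : Fin n, ‖((qt i.succ : ℚ_[p]))‖) } := by
    refine ⟨0, fun c hc => ?_⟩
    obtain ⟨qt', _, _, rfl⟩ := hc
    apply mul_nonneg
    · exact Real.iSup_nonneg fun i => by positivity
    · exact le_trans (norm_nonneg _) (le_max_left _ _)
  rw [deltaMulti, ← hTdef]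
  calc sInf _ ≤ A * B := csInf_le hbdd hmem
  _ ≤ (p:ℝ)^(-(s:ℝ)) * 1 := mul_le_mul hA hB hBnonneg (by positivity)
  _ = (p:ℝ)^(-(s:ℝ)) := mul_one _
  _ ≤ (p:ℝ) ^ (-(γ * (T:ℝ))) := Real.rpow_le_rpow_of_exponent_le hP.le (by linarith)


/-- `y ∈ ℚ_p^n` is very well multiplicatively approximable iff there is
`0 < γ < 1/(n+1)` and vectors `t ∈ ℤ_{≥0}^{n+1}` with `Σᵢ tᵢ` arbitrarily large such that
`δ(g_t u_y D^{n+1}) ≤ p^{-γ Σᵢ tᵢ}`. -/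
theorem statement8 (p : ℕ) [Fact p.Prime] (n : ℕ) (hn : 1 ≤ n) (y : Fin n → ℚ_[p]) :
    IsVWMA p y ↔ ∃ γ : ℝ, 0 < γ ∧ γ < 1 / ((n : ℝ) + 1) ∧
      ∀ N : ℕ, ∃ t : Fin (n + 1) → ℕ, N ≤ ∑ i, t i ∧
        deltaMulti p y t ≤ (p : ℝ) ^ (-(γ * ((∑ i, t i : ℕ) : ℝ))) := by
  constructor
  · exact forward p hn y
  · exact backward p hn y


end PadicDioph
end

section
/- Let p be a prime, n ≥ 1, t = (t₀, …, t_n) ∈ ℤ_{≥0}^{n+1} with t = Σᵢ tᵢ, and 0 < γ < 1/(n+1). Let q̃' = (q₀', q₁', …, q_n') with q₀' ∈ ℤ[1/p] and q₁', …, q_n' ∈ ℤ, and suppose that max_{0 ≤ i ≤ n} p^{-t_i}|q_i'|_∞ ≤ p^{-γt}. Let k = #{i : tᵢ ≥ γt}. Then Π_+(q̃') ≤ p^{(1 - kγ)t}. -/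
open MeasureTheory Metric
open scoped ENNReal NNReal

namespace PadicDioph

variable (p : ℕ) [Fact p.Prime]

/-- Let `t = (t₀,…,t_n) ∈ ℤ_{≥0}^{n+1}`, `T = Σᵢ tᵢ`,
`0 < γ < 1/(n+1)`, and `q̃' = (q₀',…,q_n')` with `q₀' ∈ ℤ[1/p]`, `q₁',…,q_n' ∈ ℤ`.
If `p^{-tᵢ}|qᵢ'|_∞ ≤ p^{-γT}` for all `i` and `k = #{i : tᵢ ≥ γT}`, then
`Π₊(q̃') ≤ p^{(1-kγ)T}`. -/
theorem statement13 (p : ℕ) [Fact p.Prime] (n : ℕ) (hn : 1 ≤ n)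
    (t : Fin (n + 1) → ℕ) (γ : ℝ) (hγ0 : 0 < γ) (hγ1 : γ < 1 / ((n : ℝ) + 1))
    (q : Fin (n + 1) → ℚ) (hq0 : IsZInvP p (q 0))
    (hqZ : ∀ i : Fin n, ∃ z : ℤ, q i.succ = (z : ℚ))
    (hmax : ∀ i, (p : ℝ) ^ (-((t i : ℝ))) * |(q i : ℝ)| ≤
      (p : ℝ) ^ (-(γ * ((∑ j, t j : ℕ) : ℝ)))) :
    piPlusQ q ≤ (p : ℝ) ^
      ((1 - ((Finset.univ.filter
          (fun i : Fin (n + 1) => γ * ((∑ j, t j : ℕ) : ℝ) ≤ (t i : ℝ))).card : ℝ) * γ) *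
        ((∑ j, t j : ℕ) : ℝ)) := by
  have hp2 : (2:ℝ) ≤ (p:ℝ) := by exact_mod_cast (Fact.out : p.Prime).two_le
  have hp1 : (1:ℝ) < (p:ℝ) := by linarith
  have hp0 : (0:ℝ) < (p:ℝ) := by linarith
  set T : ℝ := ((∑ j, t j : ℕ) : ℝ) with hT
  have hT0 : 0 ≤ T := by positivity
  have hγT : 0 ≤ γ * T := by positivity
  set e : Fin (n+1) → ℝ :=
    fun i => (t i : ℝ) - (if γ * T ≤ (t i : ℝ) then γ * T else 0) with he
  have hbound : ∀ i, (if q i = 0 then 1 else |(q i : ℝ)|) ≤ (p:ℝ) ^ (e i) := by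
    intro i
    have he0 : 0 ≤ e i := by
      simp only [he]
      split
      · linarith
      · simp [sub_nonneg]
    have hele : (t i : ℝ) - γ * T ≤ e i := by
      simp only [he]
      split
      · linarith
      · linarith
    by_cases h : q i = 0
    · simpa [h] using Real.one_le_rpow hp1.le he0
    · simp only [h, if_false]
      have h1 : |(q i : ℝ)| ≤ (p:ℝ) ^ ((t i:ℝ) - γ * T) := by
        have hm := hmax i
        have hpt : (0:ℝ) < (p:ℝ) ^ (-((t i : ℝ))) := Real.rpow_pos_of_pos hp0 _
        have : |(q i : ℝ)| ≤ (p:ℝ) ^ (-(γ * T)) / (p:ℝ) ^ (-((t i : ℝ))) := by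
          rw [le_div_iff₀ hpt]
          linarith [hm]
        calc |(q i : ℝ)| ≤ (p:ℝ) ^ (-(γ * T)) / (p:ℝ) ^ (-((t i : ℝ))) := this
          _ = (p:ℝ) ^ ((t i:ℝ) - γ * T) := by
              rw [← Real.rpow_sub hp0]; ring_nf
      exact h1.trans (Real.rpow_le_rpow_left_iff hp1 |>.mpr hele)
  have hprod : piPlusQ q ≤ ∏ i, (p:ℝ) ^ (e i) := by
    unfold piPlusQ
    apply Finset.prod_le_prod
    · intro i _
      split
      · norm_num
      · positivity
    · intro i _
      exact hbound i
  have hsum : ∑ i, e i =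
      (1 - ((Finset.univ.filter
          (fun i : Fin (n + 1) => γ * T ≤ (t i : ℝ))).card : ℝ) * γ) * T := by
    simp only [he, Finset.sum_sub_distrib]
    have h1 : ∑ i, ((t i : ℝ)) = T := by
      rw [hT]; push_cast; rfl
    have h2 : (∑ i, if γ * T ≤ (t i : ℝ) then γ * T else 0) =
        ((Finset.univ.filter
          (fun i : Fin (n + 1) => γ * T ≤ (t i : ℝ))).card : ℝ) * (γ * T) := by
      rw [← Finset.sum_filter, Finset.sum_const, nsmul_eq_mul]
    rw [h1, h2]; ring
  calc piPlusQ q ≤ ∏ i, (p:ℝ) ^ (e i) := hprod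
    _ = (p:ℝ) ^ (∑ i, e i) := (Real.rpow_sum_of_pos hp0 e Finset.univ).symm
    _ = _ := by rw [hsum]

end PadicDioph
end

section
/- Let p be a prime, n ≥ 1, y ∈ ℚ_p^n, t = (t₀, …, t_n) ∈ ℤ_{≥0}^{n+1} with t = Σᵢ tᵢ > 0, and 0 < γ < 1/(n+1). Let q̃' = (q₀', q') with q₀' ∈ ℤ[1/p] and q' = (q₁', …, q_n') ∈ ℤ^n, q̃' ≠ 0, and suppose that max( p^{t}|q₀' + q'·y|_p · max_{0 ≤ i ≤ n} p^{-t_i}|q_i'|_∞ , max_{0 ≤ i ≤ n} p^{-t_i}|q_i'|_∞ ) ≤ p^{-γt}. Let k = #{i : tᵢ ≥ γt} and m = #{i : q_i' ≠ 0}. Then |q₀' + q'·y|_p ≤ Π_+(q̃')^{-(mγ + m - kγ)/(m(1 - kγ))}. -/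
open MeasureTheory Metric
open scoped ENNReal NNReal

namespace PadicDioph

variable (p : ℕ) [Fact p.Prime]

private lemma statement14_arith (γ Tr lp la LL SN mR kR : ℝ)
    (hγ0 : 0 < γ) (hTr : 0 < Tr) (hlp : 0 < lp) (hm1 : 1 ≤ mR) (hk1 : kR * γ < 1)
    (E1 : mR * (Tr * lp + la) + (-(SN * lp) + LL) ≤ mR * (-(γ * Tr) * lp))
    (E2 : LL ≤ (SN - mR * (γ * Tr)) * lp)
    (h3 : SN ≤ Tr) (h4 : SN + (kR - mR) * (γ * Tr) ≤ Tr) :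
    la ≤ -((mR * γ + mR - kR * γ) / (mR * (1 - kR * γ))) * LL := by
  have hc1 : (0:ℝ) ≤ 1 - kR * γ := by linarith
  have hc2 : (0:ℝ) ≤ mR * (1 + γ) - 1 := by nlinarith
  have hmd : 0 < mR + (mR - kR) * γ := by nlinarith
  have KEY : SN * (mR + (mR - kR) * γ) ≤ mR * Tr * (1 + (mR - kR) * γ * (1 + γ)) := by
    rcases le_or_gt kR mR with h | h
    · have h6 : SN * (mR + (mR - kR) * γ) ≤ Tr * (mR + (mR - kR) * γ) :=
        mul_le_mul_of_nonneg_right h3 hmd.le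
      nlinarith [mul_nonneg (mul_nonneg hTr.le
        (mul_nonneg (sub_nonneg.2 h) hγ0.le)) hc2]
    · have h7 : SN ≤ Tr * (1 + (mR - kR) * γ) := by nlinarith [h4]
      have h6 : SN * (mR + (mR - kR) * γ) ≤
          (Tr * (1 + (mR - kR) * γ)) * (mR + (mR - kR) * γ) :=
        mul_le_mul_of_nonneg_right h7 hmd.le
      nlinarith [mul_nonneg (mul_nonneg hTr.le
        (by nlinarith : (0:ℝ) ≤ (kR - mR) * γ)) hc1]
  have dpos : 0 < mR * (1 - kR * γ) := by nlinarith
  rw [show -((mR * γ + mR - kR * γ) / (mR * (1 - kR * γ))) * LL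
      = -((mR * γ + mR - kR * γ) * LL) / (mR * (1 - kR * γ)) by ring,
    le_div_iff₀ dpos]
  nlinarith [mul_le_mul_of_nonneg_left E1 hc1, mul_le_mul_of_nonneg_left E2 hc2,
    mul_le_mul_of_nonneg_left KEY hlp.le]

/-- Let `y ∈ ℚ_p^n`, `t = (t₀,…,t_n) ∈ ℤ_{≥0}^{n+1}` with `T = Σᵢ tᵢ > 0`,
`0 < γ < 1/(n+1)` and `q̃' = (q₀', q') ≠ 0` with `q₀' ∈ ℤ[1/p]`, `q' ∈ ℤ^n`. If
`max( p^T |q₀' + q'·y|_p · maxᵢ p^{-tᵢ}|qᵢ'|_∞ , maxᵢ p^{-tᵢ}|qᵢ'|_∞ ) ≤ p^{-γT}`,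
`k = #{i : tᵢ ≥ γT}` and `m = #{i : qᵢ' ≠ 0}`, then
`|q₀' + q'·y|_p ≤ Π₊(q̃')^{-(mγ+m-kγ)/(m(1-kγ))}`. -/
theorem statement14 (p : ℕ) [Fact p.Prime] (n : ℕ) (hn : 1 ≤ n) (y : Fin n → ℚ_[p])
    (t : Fin (n + 1) → ℕ) (hT : 0 < ∑ j, t j)
    (γ : ℝ) (hγ0 : 0 < γ) (hγ1 : γ < 1 / ((n : ℝ) + 1))
    (q : Fin (n + 1) → ℚ) (hq0 : IsZInvP p (q 0))
    (hqZ : ∀ i : Fin n, ∃ z : ℤ, q i.succ = (z : ℚ)) (hq : q ≠ 0)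
    (hmax : max
        ((p : ℝ) ^ ((∑ j, t j : ℕ) : ℝ) *
          ‖(q 0 : ℚ_[p]) + ∑ i : Fin n, (q i.succ : ℚ_[p]) * y i‖ *
            (⨆ i, (p : ℝ) ^ (-((t i : ℝ))) * |(q i : ℝ)|))
        (⨆ i, (p : ℝ) ^ (-((t i : ℝ))) * |(q i : ℝ)|) ≤
      (p : ℝ) ^ (-(γ * ((∑ j, t j : ℕ) : ℝ)))) :
    ‖(q 0 : ℚ_[p]) + ∑ i : Fin n, (q i.succ : ℚ_[p]) * y i‖ ≤
      piPlusQ q ^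
        (-((((Finset.univ.filter (fun i : Fin (n + 1) => q i ≠ 0)).card : ℝ) * γ +
            ((Finset.univ.filter (fun i : Fin (n + 1) => q i ≠ 0)).card : ℝ) -
            ((Finset.univ.filter
              (fun i : Fin (n + 1) => γ * ((∑ j, t j : ℕ) : ℝ) ≤ (t i : ℝ))).card : ℝ) * γ) /
          (((Finset.univ.filter (fun i : Fin (n + 1) => q i ≠ 0)).card : ℝ) *
            (1 - ((Finset.univ.filter
              (fun i : Fin (n + 1) => γ * ((∑ j, t j : ℕ) : ℝ) ≤ (t i : ℝ))).card : ℝ) * γ)))) := by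

  classical
  have hp2 : 2 ≤ p := (Fact.out : p.Prime).two_le
  have hp1 : (1:ℝ) < (p:ℝ) := by exact_mod_cast (by omega : 1 < p)
  have hp0 : (0:ℝ) < (p:ℝ) := by linarith
  have hlp : 0 < Real.log p := Real.log_pos hp1
  obtain ⟨Tn, hTn⟩ : ∃ x, x = ∑ j, t j := ⟨_, rfl⟩
  rw [← hTn] at hT hmax ⊢
  obtain ⟨Tr, hTrdef⟩ : ∃ x : ℝ, x = (Tn : ℝ) := ⟨_, rfl⟩
  rw [← hTrdef] at hmax ⊢
  obtain ⟨A, hAdef⟩ : ∃ x : ℝ, x = ‖(q 0 : ℚ_[p]) + ∑ i : Fin n, (q i.succ : ℚ_[p]) * y i‖ :=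
    ⟨_, rfl⟩
  rw [← hAdef] at hmax ⊢
  obtain ⟨S, hSdef⟩ : ∃ x : ℝ, x = ⨆ i, (p : ℝ) ^ (-((t i : ℝ))) * |(q i : ℝ)| := ⟨_, rfl⟩
  rw [← hSdef] at hmax
  obtain ⟨I, hIdef⟩ : ∃ s, s = Finset.univ.filter (fun i : Fin (n + 1) => q i ≠ 0) := ⟨_, rfl⟩
  rw [← hIdef]
  obtain ⟨J, hJdef⟩ : ∃ s, s = Finset.univ.filter (fun i : Fin (n + 1) => γ * Tr ≤ (t i : ℝ)) :=
    ⟨_, rfl⟩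
  rw [← hJdef]
  obtain ⟨mR, hmRdef⟩ : ∃ x : ℝ, x = (I.card : ℝ) := ⟨_, rfl⟩
  rw [← hmRdef]
  obtain ⟨kR, hkRdef⟩ : ∃ x : ℝ, x = (J.card : ℝ) := ⟨_, rfl⟩
  rw [← hkRdef]
  have hTr : 0 < Tr := by rw [hTrdef]; exact_mod_cast hT
  have h1 : (p : ℝ) ^ Tr * A * S ≤ (p : ℝ) ^ (-(γ * Tr)) := le_trans (le_max_left _ _) hmax
  have h2 : S ≤ (p : ℝ) ^ (-(γ * Tr)) := le_trans (le_max_right _ _) hmax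
  have hterm : ∀ i, (p : ℝ) ^ (-((t i : ℝ))) * |(q i : ℝ)| ≤ S := by
    intro i
    rw [hSdef]
    exact le_ciSup (Set.Finite.bddAbove
      (Set.finite_range fun j => (p : ℝ) ^ (-((t j : ℝ))) * |(q j : ℝ)|)) i
  have habs : ∀ i ∈ I, (0:ℝ) < |(q i : ℝ)| := by
    intro i hi
    rw [hIdef, Finset.mem_filter] at hi
    exact abs_pos.mpr (by exact_mod_cast hi.2)
  have hPipos : 0 < piPlusQ q := by
    rw [piPlusQ]
    apply Finset.prod_pos
    intro i _
    by_cases h : q i = 0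
    · simp [h]
    · rw [if_neg h]
      exact abs_pos.mpr (by exact_mod_cast h)
  by_cases hA0 : A = 0
  · rw [hA0]
    exact (Real.rpow_pos_of_pos hPipos _).le
  have hAnn : 0 ≤ A := hAdef ▸ norm_nonneg _
  have hApos : 0 < A := lt_of_le_of_ne hAnn (Ne.symm hA0)
  obtain ⟨i0, hi0⟩ := Function.ne_iff.mp hq
  have hInonempty : I.Nonempty :=
    ⟨i0, by
      rw [hIdef, Finset.mem_filter]
      exact ⟨Finset.mem_univ _, by simpa using hi0⟩⟩
  have hm1 : (1:ℝ) ≤ mR := by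
    have := Finset.card_pos.mpr hInonempty
    rw [hmRdef]; exact_mod_cast this
  have hk1 : kR * γ < 1 := by
    have hkle : J.card ≤ n + 1 := by
      have h := Finset.card_le_univ J
      simpa using h
    have hkle' : kR ≤ (n:ℝ) + 1 := by rw [hkRdef]; exact_mod_cast hkle
    have hγn : γ * ((n:ℝ)+1) < 1 := by
      rw [lt_div_iff₀ (by positivity)] at hγ1; linarith
    nlinarith
  have key1 : ∀ i ∈ I, Tr * Real.log p + Real.log A +
      (-((t i : ℝ)) * Real.log p + Real.log |(q i : ℝ)|) ≤ -(γ * Tr) * Real.log p := by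
    intro i hi
    have hqi := habs i hi
    have hle : (p : ℝ) ^ Tr * A * ((p : ℝ) ^ (-((t i : ℝ))) * |(q i : ℝ)|) ≤
        (p : ℝ) ^ (-(γ * Tr)) := by
      refine le_trans ?_ h1
      exact mul_le_mul_of_nonneg_left (hterm i)
        (mul_nonneg (Real.rpow_pos_of_pos hp0 _).le hApos.le)
    have hpos : 0 < (p : ℝ) ^ Tr * A * ((p : ℝ) ^ (-((t i : ℝ))) * |(q i : ℝ)|) :=
      mul_pos (mul_pos (Real.rpow_pos_of_pos hp0 _) hApos)
        (mul_pos (Real.rpow_pos_of_pos hp0 _) hqi)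
    have hlog := Real.log_le_log hpos hle
    rw [Real.log_mul (mul_pos (Real.rpow_pos_of_pos hp0 _) hApos).ne'
          (mul_pos (Real.rpow_pos_of_pos hp0 _) hqi).ne',
        Real.log_mul (Real.rpow_pos_of_pos hp0 _).ne' hApos.ne',
        Real.log_mul (Real.rpow_pos_of_pos hp0 _).ne' hqi.ne',
        Real.log_rpow hp0, Real.log_rpow hp0, Real.log_rpow hp0] at hlog
    linarith
  have key2 : ∀ i ∈ I, Real.log |(q i : ℝ)| ≤ ((t i : ℝ) - γ * Tr) * Real.log p := by
    intro i hi
    have hqi := habs i hi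
    have hle : (p : ℝ) ^ (-((t i : ℝ))) * |(q i : ℝ)| ≤ (p : ℝ) ^ (-(γ * Tr)) :=
      le_trans (hterm i) h2
    have hlog := Real.log_le_log (mul_pos (Real.rpow_pos_of_pos hp0 _) hqi) hle
    rw [Real.log_mul (Real.rpow_pos_of_pos hp0 _).ne' hqi.ne',
        Real.log_rpow hp0, Real.log_rpow hp0] at hlog
    linarith
  obtain ⟨SN, hSNdef⟩ : ∃ x : ℝ, x = ∑ i ∈ I, (t i : ℝ) := ⟨_, rfl⟩
  obtain ⟨LL, hLLdef⟩ : ∃ x : ℝ, x = ∑ i ∈ I, Real.log |(q i : ℝ)| := ⟨_, rfl⟩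
  have E1 : mR * (Tr * Real.log p + Real.log A) + (-(SN * Real.log p) + LL) ≤
      mR * (-(γ * Tr) * Real.log p) := by
    have hs := Finset.sum_le_sum key1
    have hneg : ∑ i ∈ I, (-((t i : ℝ)) * Real.log p) =
        -((∑ i ∈ I, (t i : ℝ)) * Real.log p) := by
      calc ∑ i ∈ I, (-((t i : ℝ)) * Real.log p)
          = ∑ i ∈ I, -(((t i : ℝ)) * Real.log p) :=
            Finset.sum_congr rfl (fun i _ => by ring)
        _ = -∑ i ∈ I, ((t i : ℝ) * Real.log p) := Finset.sum_neg_distrib _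
        _ = -((∑ i ∈ I, (t i : ℝ)) * Real.log p) := by rw [Finset.sum_mul]
    have hleft : ∑ i ∈ I, (Tr * Real.log p + Real.log A +
        (-((t i : ℝ)) * Real.log p + Real.log |(q i : ℝ)|)) =
        mR * (Tr * Real.log p + Real.log A) + (-(SN * Real.log p) + LL) := by
      rw [hmRdef, hSNdef, hLLdef]
      simp only [Finset.sum_add_distrib, Finset.sum_const, nsmul_eq_mul, hneg]
      ring
    have hright : ∑ _i ∈ I, (-(γ * Tr) * Real.log p) = mR * (-(γ * Tr) * Real.log p) := by
      rw [hmRdef, Finset.sum_const, nsmul_eq_mul]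
    rw [hleft, hright] at hs
    exact hs
  have E2 : LL ≤ (SN - mR * (γ * Tr)) * Real.log p := by
    have hs := Finset.sum_le_sum key2
    rw [← Finset.sum_mul, Finset.sum_sub_distrib, Finset.sum_const, nsmul_eq_mul,
      ← hSNdef, ← hLLdef, ← hmRdef] at hs
    exact hs
  have hTreq : ∑ i : Fin (n+1), (t i:ℝ) = Tr := by
    rw [hTrdef, hTn]; push_cast; rfl
  have hSN_le : SN ≤ Tr := by
    rw [← hTreq, hSNdef, hIdef]
    exact Finset.sum_le_sum_of_subset_of_nonneg (Finset.filter_subset _ _)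
      (fun i _ _ => by positivity)
  have hJI : ((J \ I).card : ℝ) * (γ * Tr) ≤ ∑ i ∈ J \ I, (t i : ℝ) := by
    have h := Finset.card_nsmul_le_sum (J \ I) (fun i => (t i:ℝ)) (γ * Tr)
      (fun i hi => by
        have h' := (Finset.mem_sdiff.mp hi).1
        rw [hJdef, Finset.mem_filter] at h'
        exact h'.2)
    simpa [nsmul_eq_mul] using h
  have hsub : ∑ i ∈ J \ I, (t i:ℝ) ≤
      ∑ i ∈ Finset.univ.filter (fun i : Fin (n+1) => ¬ q i ≠ 0), (t i:ℝ) := by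
    apply Finset.sum_le_sum_of_subset_of_nonneg
    · intro i hi
      rw [Finset.mem_filter]
      refine ⟨Finset.mem_univ i, ?_⟩
      have h' := (Finset.mem_sdiff.mp hi).2
      rw [hIdef, Finset.mem_filter] at h'
      simpa using h'
    · intros; positivity
  have hcard : kR - mR ≤ ((J \ I).card : ℝ) := by
    have h := Finset.card_le_card_sdiff_add_card (s := J) (t := I)
    have h' : (J.card : ℝ) ≤ ((J \ I).card : ℝ) + (I.card : ℝ) := by exact_mod_cast h
    rw [hkRdef, hmRdef]; linarith
  have hSN2 : SN + (kR - mR) * (γ * Tr) ≤ Tr := by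
    have h5 : (kR - mR) * (γ*Tr) ≤ ((J \ I).card:ℝ) * (γ*Tr) :=
      mul_le_mul_of_nonneg_right hcard (by positivity)
    have h6 : SN + ∑ i ∈ Finset.univ.filter (fun i : Fin (n+1) => ¬ q i ≠ 0), (t i:ℝ) = Tr := by
      rw [hSNdef, hIdef, ← hTreq]
      exact Finset.sum_filter_add_sum_filter_not Finset.univ _ _
    linarith
  have hPieq : piPlusQ q = ∏ i ∈ I, |(q i : ℝ)| := by
    rw [piPlusQ, hIdef, Finset.prod_filter]
    exact Finset.prod_congr rfl fun i _ => (ite_not _ _ _).symm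
  have hlogPi : Real.log (piPlusQ q) = LL := by
    rw [hPieq, Real.log_prod (fun i hi => (habs i hi).ne'), hLLdef]
  have hfin := statement14_arith γ Tr (Real.log p) (Real.log A) LL SN mR kR
    hγ0 hTr hlp hm1 hk1 E1 E2 hSN_le hSN2
  rw [Real.rpow_def_of_pos hPipos, hlogPi]
  rw [← Real.exp_log hApos]
  apply Real.exp_le_exp.mpr
  nlinarith [hfin, Real.exp_log hApos]

end PadicDioph
end
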